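/- arXiv:2107.13611 — 6 statements merged into one kernel-verified Lean document; each statement's English description precedes it below -/
import Mathlib

section
/- Let q be a prime power, let r ≥ 1 be an integer, and let f : F_q^{r×r} → F_q be an F_q-linear map that takes the same value on every invertible matrix in GL_r(F_q). If r > 1 or q ≠ 2, then f is the zero map. -/
open Matrix

/-- A linear form on `r × r` matrices over `F_q` that is constant on all
invertible matrices is the zero form, provided `r > 1` or `q ≠ 2`. -/
theorem statement2 (q : ℕ) (hq : IsPrimePow q)
    (F : Type) [Field F] [Fintype F] (hF : Fintype.card F = q)
    (r : ℕ) (hr : 1 ≤ r)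
    (f : Matrix (Fin r) (Fin r) F →ₗ[F] F)
    (hconst : ∀ M N : Matrix (Fin r) (Fin r) F, IsUnit M → IsUnit N → f M = f N)
    (h : 1 < r ∨ q ≠ 2) :
    f = 0 := by
  classical
  -- `1 + E i j` is a unit for `i ≠ j`
  have hunit : ∀ i j : Fin r, i ≠ j →
      IsUnit (1 + single i j (1 : F)) := by
    intro i j hij
    have hEE : single i j (1 : F) * single i j (1 : F) = 0 :=
      single_mul_single_of_ne (c := (1 : F)) i j i hij.symm 1
    have key : (1 + single i j (1 : F)) * (1 - single i j (1 : F)) = 1 := by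
      rw [mul_sub, add_mul, add_mul, hEE]; noncomm_ring
    have key2 : (1 - single i j (1 : F)) * (1 + single i j (1 : F)) = 1 := by
      rw [mul_add, sub_mul, sub_mul, hEE]; noncomm_ring
    exact ⟨⟨_, _, key, key2⟩, rfl⟩
  have hfone : ∀ M, IsUnit M → f M = f 1 := fun M hM => hconst M 1 hM isUnit_one
  -- f vanishes on off-diagonal basis matrices
  have hoff : ∀ i j : Fin r, i ≠ j → f (single i j (1 : F)) = 0 := by
    intro i j hij
    have h1 := hfone _ (hunit i j hij)
    rw [map_add] at h1
    linear_combination h1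
  have hbasis : ∀ i j : Fin r, f (single i j (1 : F)) = 0 := by
    intro i j
    rcases eq_or_ne i j with rfl | hij
    · -- diagonal case
      by_cases hr2 : ∃ j' : Fin r, j' ≠ i
      · obtain ⟨j', hj'⟩ := hr2
        have hEE : single i j' (1 : F) * single j' i (1 : F)
            = single i i 1 := by
          rw [single_mul_single_same, one_mul]
        have hprod : (1 + single i j' (1 : F)) * (1 + single j' i (1 : F))
            = 1 + single i j' 1 + single j' i 1 + single i i 1 := by
          rw [mul_add, add_mul, add_mul, hEE]; noncomm_ring
        have hU : IsUnit ((1 + single i j' (1 : F)) * (1 + single j' i (1 : F))) :=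
          (hunit i j' (Ne.symm hj')).mul (hunit j' i hj')
        have h1 := hfone _ hU
        rw [hprod, map_add, map_add, map_add, hoff i j' (Ne.symm hj'), hoff j' i hj'] at h1
        linear_combination h1
      · -- r = 1 case, so q ≠ 2
        push_neg at hr2
        have hq2 : q ≠ 2 := by
          rcases h with h | h
          · obtain ⟨b, hb⟩ := Fintype.exists_ne_of_one_lt_card (by simpa using h) i
            exact absurd (hr2 b) hb
          · exact h
        -- find a ∈ F with a ≠ 0 and a ≠ 1
        have hq3 : 2 < Fintype.card F := by
          have := hq.two_le; omega
        obtain ⟨a, ha0, ha1⟩ : ∃ a : F, a ≠ 0 ∧ a ≠ 1 := by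
          by_contra hc
          push_neg at hc
          have hsub : (Finset.univ : Finset F) ⊆ {0, 1} := by
            intro x _
            simp only [Finset.mem_insert, Finset.mem_singleton]
            rcases eq_or_ne x 0 with h0 | h0
            · exact Or.inl h0
            · exact Or.inr (hc x h0)
          have h2 := Finset.card_le_card hsub
          rw [Finset.card_univ] at h2
          have h3 : ({0, 1} : Finset F).card ≤ 2 :=
            (Finset.card_insert_le 0 {1}).trans (by simp)
          omega
        -- a • 1 is a unit
        have hsu : IsUnit (a • (1 : Matrix (Fin r) (Fin r) F)) := by
          refine ⟨⟨_, a⁻¹ • (1 : Matrix (Fin r) (Fin r) F), ?_, ?_⟩, rfl⟩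
          · rw [smul_mul_smul_comm, mul_inv_cancel₀ ha0, one_mul, one_smul]
          · rw [smul_mul_smul_comm, inv_mul_cancel₀ ha0, one_mul, one_smul]
        have h1 := hfone _ hsu
        rw [f.map_smul, smul_eq_mul] at h1
        have hf1 : f 1 = 0 := by
          have : (a - 1) * f 1 = 0 := by linear_combination h1
          rcases mul_eq_zero.mp this with h' | h'
          · exact absurd (by linear_combination h') ha1
          · exact h'
        have hEone : single i i (1 : F) = 1 := by
          ext a b
          rw [hr2 a, hr2 b]
          simp [single, one_apply]
        rw [hEone, hf1]
    · exact hoff i j hij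
  ext M
  rw [matrix_eq_sum_single M]
  simp only [map_sum]
  have hz : ∀ i j : Fin r, f (single i j (M i j)) = 0 := by
    intro i j
    have he : single i j (M i j) = M i j • single i j (1 : F) := by
      rw [smul_single, smul_eq_mul, mul_one]
    rw [he, f.map_smul, hbasis, smul_zero]
  simp [hz]
end

section
/- (Anticode Bound for the sum-rank metric.) Let 𝒞 ⊆ 𝕄 be an F_q-linear subspace. Then dim(𝒞) ≤ max_{C ∈ 𝒞} ∑_{i=1}^ℓ m_i·rk(C_i). In particular, if m_1 = … = m_ℓ = m, then dim(𝒞) ≤ m·maxsrk(𝒞). -/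
open Matrix

/-- The sum-rank weight of a tuple of matrices. -/
noncomputable def srk {F : Type} [Field F] {ℓ : ℕ} {m n : Fin ℓ → ℕ}
    (C : ∀ i, Matrix (Fin (m i)) (Fin (n i)) F) : ℕ :=
  ∑ i, (C i).rank

/-- The maximum sum-rank weight of a linear sum-rank metric code. -/
noncomputable def maxsrk {F : Type} [Field F] {ℓ : ℕ} {m n : Fin ℓ → ℕ}
    (𝒞 : Submodule F (∀ i, Matrix (Fin (m i)) (Fin (n i)) F)) : ℕ :=
  sSup {k | ∃ C ∈ 𝒞, srk C = k}

namespace AnticodeProof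

open Module LinearMap Submodule

set_option maxHeartbeats 1000000
set_option synthInstance.maxHeartbeats 400000
set_option linter.unusedSectionVars false

section Linear

variable {F : Type} [Field F] {V W : Type} [AddCommGroup V] [Module F V]
  [AddCommGroup W] [Module F W] [FiniteDimensional F V] [FiniteDimensional F W]

lemma finrank_eq_map_add_inf_ker {M M₂ : Type} [AddCommGroup M] [Module F M]
    [FiniteDimensional F M] [AddCommGroup M₂] [Module F M₂]
    (φ : M →ₗ[F] M₂) (p : Submodule F M) :
    finrank F p = finrank F (p.map φ) + finrank F (p ⊓ ker φ : Submodule F M) := by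
  have h := finrank_range_add_finrank_ker (φ.domRestrict p)
  rw [range_domRestrict, ker_domRestrict] at h
  have he : comap p.subtype (ker φ) = comap p.subtype (p ⊓ ker φ) := by
    ext x; simp [x.2]
  rw [he] at h
  rw [← h, (comapSubtypeEquivOfLe (inf_le_left : p ⊓ ker φ ≤ p)).finrank_eq]

lemma aux_count (hVW : finrank F V ≤ finrank F W) (f : V →ₗ[F] W)
    (S : Submodule F (V →ₗ[F] W))
    (hmax' : ∀ E ∈ S, finrank F (range (f + E)) ≤ finrank F (range f)) :
    finrank F S ≤ finrank F W * finrank F (range f) := by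
  classical
  obtain ⟨P, hP⟩ := Submodule.exists_isCompl (ker f)
  obtain ⟨V₁, hV₁⟩ := Submodule.exists_isCompl (range f)
  have hdecomp : ∀ v : V, ∃ (u : ker f) (p : P), v = ↑u + ↑p := by
    intro v
    have hv : v ∈ (ker f) ⊔ P := by rw [hP.sup_eq_top]; trivial
    obtain ⟨y, hy, z, hz, hyz⟩ := Submodule.mem_sup.mp hv
    exact ⟨⟨y, hy⟩, ⟨z, hz⟩, hyz.symm⟩
  -- Step 1
  have step1 : ∀ E ∈ S, (∀ x : P, E ↑x = 0) → range (f + E) = range f ∧ range E ≤ range f := by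
    intro E hE hEP
    have hle : range f ≤ range (f + E) := by
      rintro w ⟨v, rfl⟩
      obtain ⟨u, p, rfl⟩ := hdecomp v
      refine ⟨↑p, ?_⟩
      have hu : f ↑u = 0 := u.2
      simp [hEP p, hu]
    have heq : range f = range (f + E) :=
      Submodule.eq_of_le_of_finrank_le hle (hmax' E hE)
    refine ⟨heq.symm, ?_⟩
    rintro w ⟨v, rfl⟩
    have h1 : (f + E) v ∈ range f := heq ▸ ⟨v, rfl⟩
    have h2 : f v ∈ range f := ⟨v, rfl⟩
    have h3 : E v = (f + E) v - f v := by simp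
    rw [h3]
    exact sub_mem h1 h2
  have hPdim : finrank F P = finrank F (range f) := by
    have h1 := finrank_range_add_finrank_ker f
    have h2 := Submodule.finrank_add_eq_of_isCompl hP
    omega
  -- Step 2
  have step2 : ∀ E1 ∈ S, (∀ x : P, E1 ↑x = 0) → ∀ E' ∈ S, (∀ x : P, E' ↑x ∈ V₁) →
      ∀ p : P, f ↑p ∈ range E1 → E' ↑p = 0 := by
    intro E1 hE1 hE1P E' hE' haP p hfp
    obtain ⟨u, hu⟩ := hfp
    set g0 : V →ₗ[F] W := f + E' with hg0
    set g1 : V →ₗ[F] W := f + E1 + E' with hg1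
    have hrk0 : finrank F (range g0) ≤ finrank F (range f) := hmax' E' hE'
    have hrk1 : finrank F (range g1) ≤ finrank F (range f) := by
      have : g1 = f + (E1 + E') := by rw [hg1, add_assoc]
      rw [this]
      exact hmax' _ (S.add_mem hE1 hE')
    set Γ : Submodule F W := range (g0 ∘ₗ P.subtype) with hΓ
    have hinj : ker (g0 ∘ₗ P.subtype) = ⊥ := by
      rw [eq_bot_iff]
      rintro x hx
      have hx' : f ↑x + E' ↑x = 0 := hx
      have h4 : f ↑x ∈ range f ⊓ V₁ := by
        constructor
        · exact ⟨↑x, rfl⟩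
        · rw [eq_neg_of_add_eq_zero_left hx']
          exact V₁.neg_mem (haP x)
      have h5 : f ↑x = 0 := by
        have := hV₁.disjoint.le_bot h4
        simpa using this
      have h6 : (↑x : V) ∈ ker f ⊓ P := ⟨h5, x.2⟩
      have h7 : (↑x : V) = 0 := by
        have := hP.disjoint.le_bot h6
        simpa using this
      simpa [Submodule.mem_bot] using Subtype.ext h7
    have hΓdim : finrank F Γ = finrank F (range f) := by
      have h8 := finrank_range_add_finrank_ker (g0 ∘ₗ P.subtype)
      rw [hinj] at h8
      simp only [finrank_bot] at h8
      rw [hΓ]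
      omega
    have hg0Γ : range g0 = Γ := by
      symm
      apply Submodule.eq_of_le_of_finrank_le
      · rintro w ⟨x, rfl⟩; exact ⟨↑x, rfl⟩
      · rw [hΓdim]; exact hrk0
    have hcomp : g1 ∘ₗ P.subtype = g0 ∘ₗ P.subtype := by
      ext x
      simp [hg0, hg1, hE1P x]
    have hg1Γ : range g1 = Γ := by
      symm
      apply Submodule.eq_of_le_of_finrank_le
      · rintro w ⟨x, rfl⟩
        refine ⟨↑x, ?_⟩
        have := LinearMap.congr_fun hcomp x
        exact this
      · rw [hΓdim]; exact hrk1
    have hmem : E1 u ∈ Γ := by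
      have h0 : g0 u ∈ Γ := hg0Γ ▸ ⟨u, rfl⟩
      have h1' : g1 u ∈ Γ := hg1Γ ▸ ⟨u, rfl⟩
      have hsub : g1 u - g0 u = E1 u := by simp [hg0, hg1]
      rw [← hsub]
      exact sub_mem h1' h0
    obtain ⟨x, hx⟩ := hmem
    have h5 : f ↑x + E' ↑x = f ↑p := by
      have : (g0 ∘ₗ P.subtype) x = E1 u := hx
      rw [hu] at this
      exact this
    have h6 : E' ↑x ∈ range f := by
      refine ⟨↑p - ↑x, ?_⟩
      rw [map_sub]
      exact (eq_sub_of_add_eq' h5).symm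
    have h7 : E' ↑x = 0 := by
      have := hV₁.disjoint.le_bot ⟨h6, haP x⟩
      simpa using this
    have h8 : f (↑p - ↑x) = 0 := by
      rw [h7, add_zero] at h5
      rw [map_sub, sub_eq_zero]
      exact h5.symm
    have h9 : (↑p - ↑x : V) ∈ ker f ⊓ P := ⟨h8, sub_mem p.2 x.2⟩
    have h10 : (↑p : V) = ↑x := by
      have := hP.disjoint.le_bot h9
      simp only [Submodule.mem_bot] at this
      exact sub_eq_zero.mp this
    rw [h10, h7]
  -- projection maps
  set φa : (V →ₗ[F] W) →ₗ[F] (↥P →ₗ[F] (W ⧸ V₁)) :=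
    (LinearMap.llcomp F ↥P W (W ⧸ V₁) V₁.mkQ) ∘ₗ (LinearMap.lcomp F W P.subtype) with hφa
  set φc : (V →ₗ[F] W) →ₗ[F] (↥P →ₗ[F] (W ⧸ range f)) :=
    (LinearMap.llcomp F ↥P W (W ⧸ range f) (range f).mkQ) ∘ₗ (LinearMap.lcomp F W P.subtype) with hφc
  set φb : (V →ₗ[F] W) →ₗ[F] (↥(ker f) →ₗ[F] W) := LinearMap.lcomp F W (ker f).subtype with hφb
  have hφa_apply : ∀ (E : V →ₗ[F] W) (x : ↥P), (φa E) x = V₁.mkQ (E ↑x) := fun E x => rfl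
  have hφc_apply : ∀ (E : V →ₗ[F] W) (x : ↥P), (φc E) x = (range f).mkQ (E ↑x) := fun E x => rfl
  have hkerφa : ∀ E : V →ₗ[F] W, E ∈ ker φa ↔ ∀ x : ↥P, E ↑x ∈ V₁ := by
    intro E
    rw [mem_ker]
    constructor
    · intro h x
      have h2 := LinearMap.congr_fun h x
      rw [hφa_apply, Submodule.mkQ_apply] at h2
      rw [← Submodule.Quotient.mk_eq_zero V₁]
      exact h2
    · intro h
      ext x
      rw [LinearMap.zero_apply, hφa_apply, Submodule.mkQ_apply,
        Submodule.Quotient.mk_eq_zero V₁]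
      exact h x
  have hkerφc : ∀ E : V →ₗ[F] W, E ∈ ker φc ↔ ∀ x : ↥P, E ↑x ∈ range f := by
    intro E
    rw [mem_ker]
    constructor
    · intro h x
      have h2 := LinearMap.congr_fun h x
      rw [hφc_apply, Submodule.mkQ_apply] at h2
      rw [← Submodule.Quotient.mk_eq_zero (range f)]
      exact h2
    · intro h
      ext x
      rw [LinearMap.zero_apply, hφc_apply, Submodule.mkQ_apply,
        Submodule.Quotient.mk_eq_zero (range f)]
      exact h x
  set S2 : Submodule F (V →ₗ[F] W) := S ⊓ ker φa with hS2
  set S1 : Submodule F (V →ₗ[F] W) := S2 ⊓ ker φc with hS1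
  have hS1S : S1 ≤ S := le_trans inf_le_left inf_le_left
  have hS2S : S2 ≤ S := inf_le_left
  have hS1P : ∀ E ∈ S1, ∀ x : ↥P, E ↑x = 0 := by
    intro E hE x
    have h1 : E ↑x ∈ V₁ := (hkerφa E).mp hE.1.2 x
    have h2 : E ↑x ∈ range f := (hkerφc E).mp hE.2 x
    have := hV₁.disjoint.le_bot ⟨h2, h1⟩
    simpa using this
  set T : Submodule F W := ⨆ (E : ↥S1), range (E : V →ₗ[F] W) with hT
  have hTmem : ∀ E ∈ S1, range E ≤ T := fun E hE =>
    le_iSup (fun E : ↥S1 => range (E : V →ₗ[F] W)) ⟨E, hE⟩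
  have hTrange : T ≤ range f := by
    rw [hT]
    exact iSup_le fun E => (step1 E (hS1S E.2) (hS1P E E.2)).2
  set P₀ : Submodule F ↥P := comap (f ∘ₗ P.subtype) T with hP₀
  have hvanish : ∀ E' ∈ S2, ∀ p : ↥P, p ∈ P₀ → E' ↑p = 0 := by
    intro E' hE2 q hq
    have hq' : f ↑q ∈ ⨆ (E : ↥S1), range (E : V →ₗ[F] W) := hq
    have key : ∃ p : ↥P, f ↑p = f ↑q ∧ E' ↑p = 0 := by
      refine Submodule.iSup_induction (motive := fun w => ∃ p : ↥P, f ↑p = w ∧ E' ↑p = 0)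
        _ hq' ?_ ?_ ?_
      · rintro E1 w hw
        have hwf : w ∈ range f := (step1 E1 (hS1S E1.2) (hS1P E1 E1.2)).2 hw
        obtain ⟨v, hv⟩ := hwf
        obtain ⟨u, p, rfl⟩ := hdecomp v
        have hfp : f ↑p = w := by
          rw [← hv, map_add]
          have hu : f ↑u = 0 := u.2
          rw [hu, zero_add]
        refine ⟨p, hfp, ?_⟩
        exact step2 E1 (hS1S E1.2) (hS1P E1 E1.2) E' (hS2S hE2)
          ((hkerφa E').mp hE2.2) p (by rw [hfp]; exact hw)
      · exact ⟨0, by simp, by simp⟩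
      · rintro w1 w2 ⟨p1, h1, h1'⟩ ⟨p2, h2, h2'⟩
        exact ⟨p1 + p2, by rw [Submodule.coe_add, map_add, h1, h2], by
          rw [Submodule.coe_add, map_add, h1', h2', add_zero]⟩
    obtain ⟨p0, hp0, hp0'⟩ := key
    have h9 : (↑q - ↑p0 : V) ∈ ker f ⊓ P := by
      rw [Submodule.mem_inf]
      refine ⟨?_, sub_mem q.2 p0.2⟩
      rw [mem_ker, map_sub, hp0, sub_self]
    have h10 : (↑q : V) = ↑p0 := by
      have := hP.disjoint.le_bot h9
      simp only [Submodule.mem_bot] at this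
      exact sub_eq_zero.mp this
    rw [h10, hp0']
  -- dimension bookkeeping
  have hQ1dim : finrank F (W ⧸ V₁) = finrank F (range f) := by
    have h1 := Submodule.finrank_quotient_add_finrank V₁
    have h2 := Submodule.finrank_add_eq_of_isCompl hV₁
    omega
  have hQ2r : finrank F (W ⧸ range f) + finrank F (range f) = finrank F W :=
    Submodule.finrank_quotient_add_finrank (range f)
  have hkerd : finrank F (range f) + finrank F (ker f) = finrank F V :=
    finrank_range_add_finrank_ker f
  have haB : finrank F (S.map φa) ≤ finrank F (range f) * finrank F (range f) := by
    have h1 : finrank F (S.map φa) ≤ finrank F (↥P →ₗ[F] (W ⧸ V₁)) := Submodule.finrank_le _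
    rwa [Module.finrank_linearMap, hPdim, hQ1dim] at h1
  -- c bound
  set ρ : (↥P →ₗ[F] (W ⧸ range f)) →ₗ[F] (↥P₀ →ₗ[F] (W ⧸ range f)) :=
    LinearMap.lcomp F (W ⧸ range f) P₀.subtype with hρ
  have hcB1 : S2.map φc ≤ ker ρ := by
    rintro _ ⟨E', hE', rfl⟩
    rw [mem_ker]
    ext p
    have h1 : (ρ (φc E')) p = (range f).mkQ (E' ↑(↑p : ↥P)) := rfl
    rw [h1]
    have h2 : E' ↑(↑p : ↥P) = 0 := hvanish E' hE' ↑p p.2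
    rw [h2]
    simp
  have hρsurj : Function.Surjective ρ := by
    intro g
    obtain ⟨g', hg'⟩ := LinearMap.exists_extend g
    exact ⟨g', hg'⟩
  have hρdim : finrank F (ker ρ) + finrank F (↥P₀ →ₗ[F] (W ⧸ range f))
      = finrank F (↥P →ₗ[F] (W ⧸ range f)) := by
    have h1 := finrank_range_add_finrank_ker ρ
    rw [LinearMap.range_eq_top.mpr hρsurj, finrank_top] at h1
    omega
  have hcB : finrank F (S2.map φc) ≤ finrank F (ker ρ) := Submodule.finrank_mono hcB1
  -- b bound
  have hbB1 : S1.map φb ≤ range (LinearMap.llcomp (σ₁₂ := RingHom.id F) (σ₁₃ := RingHom.id F) F ↥(ker f) ↥T W T.subtype) := by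
    rintro _ ⟨E, hE, rfl⟩
    refine ⟨LinearMap.codRestrict T (φb E) (fun c => hTmem E hE ⟨↑c, rfl⟩), ?_⟩
    ext c
    rfl
  have hbB : finrank F (S1.map φb) ≤ finrank F (ker f) * finrank F T := by
    refine le_trans (Submodule.finrank_mono hbB1) ?_
    refine le_trans (finrank_range_le _) ?_
    rw [Module.finrank_linearMap]
  have hkT : finrank F T ≤ finrank F P₀ := by
    have hle : T ≤ Submodule.map (f ∘ₗ P.subtype) P₀ := by
      intro w hw
      have hwf : w ∈ range f := hTrange hw
      obtain ⟨v, hv⟩ := hwf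
      obtain ⟨u, p, rfl⟩ := hdecomp v
      have hfp : f ↑p = w := by
        rw [← hv, map_add]
        have hu : f ↑u = 0 := u.2
        rw [hu, zero_add]
      refine ⟨p, ?_, hfp⟩
      show f ↑p ∈ T
      rw [hfp]
      exact hw
    exact le_trans (Submodule.finrank_mono hle) (Submodule.finrank_map_le _ _)
  have hinjb : S1 ⊓ ker φb = ⊥ := by
    rw [eq_bot_iff]
    rintro E ⟨hE1, hEb⟩
    have hP' : ∀ x : ↥P, E ↑x = 0 := hS1P E hE1
    have hK' : ∀ x : ↥(ker f), E ↑x = 0 := by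
      intro x
      exact LinearMap.congr_fun (mem_ker.mp hEb) x
    have hE0 : E = 0 := by
      ext v
      obtain ⟨u, p, rfl⟩ := hdecomp v
      rw [map_add, hP' p, hK' u, add_zero]
      rfl
    simp [hE0]
  -- chains
  have c1 : finrank F S = finrank F (S.map φa) + finrank F S2 :=
    finrank_eq_map_add_inf_ker φa S
  have c2 : finrank F S2 = finrank F (S2.map φc) + finrank F S1 :=
    finrank_eq_map_add_inf_ker φc S2
  have c3 : finrank F S1 = finrank F (S1.map φb) := by
    have h1 := finrank_eq_map_add_inf_ker φb S1
    rw [hinjb] at h1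
    simpa using h1
  -- final arithmetic
  have hkP : finrank F P₀ ≤ finrank F (range f) := by
    have := Submodule.finrank_le P₀
    rwa [hPdim] at this
  have hkerq2 : finrank F (ker f) ≤ finrank F (W ⧸ range f) := by omega
  have hPHom : finrank F (↥P →ₗ[F] (W ⧸ range f))
      = finrank F (range f) * finrank F (W ⧸ range f) := by
    rw [Module.finrank_linearMap, hPdim]
  have hP0Hom : finrank F (↥P₀ →ₗ[F] (W ⧸ range f))
      = finrank F P₀ * finrank F (W ⧸ range f) := by
    rw [Module.finrank_linearMap]
  have hbB2 : finrank F (S1.map φb) ≤ finrank F (W ⧸ range f) * finrank F P₀ :=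
    le_trans hbB (Nat.mul_le_mul hkerq2 hkT)
  have hcb : finrank F (S2.map φc) + finrank F (S1.map φb)
      ≤ finrank F (range f) * finrank F (W ⧸ range f) := by
    rw [hPHom, hP0Hom] at hρdim
    have h3 : finrank F (W ⧸ range f) * finrank F P₀
        = finrank F P₀ * finrank F (W ⧸ range f) := Nat.mul_comm _ _
    omega
  have hfinal : finrank F (range f) * finrank F (range f)
      + finrank F (range f) * finrank F (W ⧸ range f) = finrank F W * finrank F (range f) := by
    rw [← hQ2r]
    ring
  omega

lemma coset_bound (hVW : finrank F V ≤ finrank F W) (A : V →ₗ[F] W)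
    (S : Submodule F (V →ₗ[F] W)) :
    ∃ D ∈ S, finrank F S ≤ finrank F W * finrank F (range (A + D)) := by
  classical
  set rset : Set ℕ := {k | ∃ D ∈ S, finrank F (range (A + D)) = k} with hrset
  have hne : rset.Nonempty := ⟨_, 0, S.zero_mem, rfl⟩
  have hbdd : BddAbove rset := by
    refine ⟨finrank F V, ?_⟩
    rintro k ⟨D, hD, rfl⟩
    exact finrank_range_le _
  obtain ⟨Dstar, hDstar, hr⟩ := Nat.sSup_mem hne hbdd
  refine ⟨Dstar, hDstar, ?_⟩
  refine aux_count hVW (A + Dstar) S ?_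
  intro E hE
  rw [add_assoc, hr]
  exact le_csSup hbdd ⟨Dstar + E, S.add_mem hDstar hE, rfl⟩


end Linear

lemma coset_matrix {F : Type} [Field F] {mm nn : ℕ} (h : nn ≤ mm)
    (A : Matrix (Fin mm) (Fin nn) F) (S : Submodule F (Matrix (Fin mm) (Fin nn) F)) :
    ∃ D ∈ S, finrank F S ≤ mm * (A + D).rank := by
  classical
  have hVW : finrank F (Fin nn → F) ≤ finrank F (Fin mm → F) := by
    simpa using h
  obtain ⟨D', hD', hle⟩ := coset_bound hVW (Matrix.toLin' A)
    (S.map ((Matrix.toLin' : Matrix (Fin mm) (Fin nn) F ≃ₗ[F] _) : Matrix (Fin mm) (Fin nn) F →ₗ[F] _))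
  obtain ⟨D, hD, rfl⟩ := hD'
  refine ⟨D, hD, ?_⟩
  have h1 : finrank F (S.map ((Matrix.toLin' : Matrix (Fin mm) (Fin nn) F ≃ₗ[F] ((Fin nn → F) →ₗ[F] (Fin mm → F))) : Matrix (Fin mm) (Fin nn) F →ₗ[F] ((Fin nn → F) →ₗ[F] (Fin mm → F))))
      = finrank F S := LinearEquiv.finrank_map_eq Matrix.toLin' S
  have h2 : Matrix.toLin' A + ((Matrix.toLin' : Matrix (Fin mm) (Fin nn) F ≃ₗ[F] ((Fin nn → F) →ₗ[F] (Fin mm → F))) : Matrix (Fin mm) (Fin nn) F →ₗ[F] ((Fin nn → F) →ₗ[F] (Fin mm → F))) D = Matrix.toLin' (A + D) := by simp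
  have h3 : finrank F (Fin mm → F) = mm := by simp
  rw [h1, h2, h3] at hle
  exact hle

lemma main_aux {F : Type} [Field F] {ℓ : ℕ} (m n : Fin ℓ → ℕ) (hnm : ∀ i, n i ≤ m i)
    (s : Finset (Fin ℓ)) (A : ∀ i, Matrix (Fin (m i)) (Fin (n i)) F)
    (𝒞 : Submodule F (∀ i, Matrix (Fin (m i)) (Fin (n i)) F))
    (hsupp : ∀ C ∈ 𝒞, ∀ i ∉ s, C i = 0) :
    ∃ C ∈ 𝒞, finrank F 𝒞 ≤ ∑ i ∈ s, m i * (A i + C i).rank := by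
  classical
  induction s using Finset.induction_on generalizing A 𝒞 with
  | empty =>
    refine ⟨0, 𝒞.zero_mem, ?_⟩
    have h𝒞 : 𝒞 = ⊥ := by
      rw [eq_bot_iff]
      intro C hC
      have : C = 0 := funext fun i => hsupp C hC i (Finset.notMem_empty i)
      simp [this]
    simp [h𝒞]
  | @insert i₀ s hi₀ ih =>
    set π : (∀ i, Matrix (Fin (m i)) (Fin (n i)) F) →ₗ[F] Matrix (Fin (m i₀)) (Fin (n i₀)) F :=
      LinearMap.proj i₀ with hπ
    obtain ⟨D', hD', hDle⟩ := coset_matrix (hnm i₀) (A i₀) (𝒞.map π)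
    obtain ⟨D, hD, rfl⟩ := hD'
    have hKsupp : ∀ C ∈ 𝒞 ⊓ ker π, ∀ i ∉ s, C i = 0 := by
      intro C hC i hi
      by_cases hii : i = i₀
      · subst hii
        exact hC.2
      · exact hsupp C hC.1 i (by simp [Finset.mem_insert, hii, hi])
    obtain ⟨E, hE, hEle⟩ := ih (fun i => A i + D i) (𝒞 ⊓ ker π) hKsupp
    have hE𝒞 : E ∈ 𝒞 := hE.1
    have hEi₀ : E i₀ = 0 := hE.2
    refine ⟨D + E, 𝒞.add_mem hD hE𝒞, ?_⟩
    have hdim : finrank F 𝒞 = finrank F (𝒞.map π) + finrank F (𝒞 ⊓ ker π : Submodule F _) :=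
      finrank_eq_map_add_inf_ker π 𝒞
    rw [Finset.sum_insert hi₀]
    have t1 : A i₀ + (D + E) i₀ = A i₀ + π D := by
      have : (D + E) i₀ = D i₀ + E i₀ := rfl
      rw [this, hEi₀, add_zero]
      rfl
    have t2 : ∑ i ∈ s, m i * (A i + (D + E) i).rank
        = ∑ i ∈ s, m i * ((fun i => A i + D i) i + E i).rank := by
      refine Finset.sum_congr rfl fun i hi => ?_
      have : A i + (D + E) i = (A i + D i) + E i := by
        have h4 : (D + E) i = D i + E i := rfl
        rw [h4, add_assoc]
      rw [this]
    rw [t1, t2]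
    calc finrank F 𝒞 = finrank F (𝒞.map π) + finrank F (𝒞 ⊓ ker π : Submodule F _) := hdim
      _ ≤ m i₀ * (A i₀ + π D).rank + ∑ i ∈ s, m i * ((fun i => A i + D i) i + E i).rank :=
          add_le_add hDle hEle

end AnticodeProof


/-- **Anticode Bound** for the sum-rank metric. -/
theorem statement3 (q : ℕ) (hq : IsPrimePow q)
    (F : Type) [Field F] [Fintype F] (hF : Fintype.card F = q)
    (ℓ : ℕ) (hℓ : 1 ≤ ℓ) (m n : Fin ℓ → ℕ)
    (hm : ∀ i, 1 ≤ m i) (hn : ∀ i, 1 ≤ n i)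
    (hmon : Antitone m) (hnm : ∀ i, n i ≤ m i)
    (𝒞 : Submodule F (∀ i, Matrix (Fin (m i)) (Fin (n i)) F)) :
    Module.finrank F 𝒞 ≤ sSup {k | ∃ C ∈ 𝒞, ∑ i, m i * (C i).rank = k} ∧
    ∀ m₀ : ℕ, (∀ i, m i = m₀) → Module.finrank F 𝒞 ≤ m₀ * maxsrk 𝒞 := by
  obtain ⟨C, hC, hle⟩ := AnticodeProof.main_aux m n hnm Finset.univ (fun _ => 0) 𝒞
    (fun C _ i hi => absurd (Finset.mem_univ i) hi)
  simp only [zero_add] at hle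
  constructor
  · have hbdd : BddAbove {k | ∃ C ∈ 𝒞, ∑ i, m i * (C i).rank = k} := by
      refine ⟨∑ i, m i * n i, ?_⟩
      rintro k ⟨C', _, rfl⟩
      exact Finset.sum_le_sum fun i _ => Nat.mul_le_mul_left _ (Matrix.rank_le_width _)
    exact le_trans hle (le_csSup hbdd ⟨C, hC, rfl⟩)
  · intro m₀ hm₀
    have h1 : ∑ i, m i * (C i).rank = m₀ * srk C := by
      rw [srk, Finset.mul_sum]
      exact Finset.sum_congr rfl fun i _ => congrArg (fun t => t * (C i).rank) (hm₀ i)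
    have hbdd2 : BddAbove {k | ∃ C ∈ 𝒞, srk C = k} := by
      refine ⟨∑ i, n i, ?_⟩
      rintro k ⟨C', _, rfl⟩
      exact Finset.sum_le_sum fun i _ => Matrix.rank_le_width _
    have h2 : srk C ≤ maxsrk 𝒞 := le_csSup hbdd2 ⟨C, hC, rfl⟩
    calc Module.finrank F 𝒞 ≤ m₀ * srk C := h1 ▸ hle
      _ ≤ m₀ * maxsrk 𝒞 := Nat.mul_le_mul_left m₀ h2
end

section
/- Let m ≥ 2, m ≥ n ≥ 1, and let 𝒞 ⊆ F_2^{m×n} be an optimal rank-metric anticode with maxrk(𝒞) = t. Then every element of 𝒞 of rank t can be written as the sum of two elements of 𝒞 of rank t. -/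
open Matrix

/-- The maximum rank of a linear rank-metric code. -/
noncomputable def maxrk {F : Type} [Field F] {a b : ℕ}
    (𝒜 : Submodule F (Matrix (Fin a) (Fin b) F)) : ℕ :=
  sSup {k | ∃ M ∈ 𝒜, M.rank = k}

section Auxiliary

open Finset Polynomial

lemma zmod2_cases : ∀ d : ZMod 2, d = 0 ∨ d = 1 := by decide

lemma zmod2_add_self {M : Type*} [AddCommGroup M] [Module (ZMod 2) M] (v : M) : v + v = 0 := by
  have h2 : (2 : ZMod 2) = 0 := by decide
  rw [← two_smul (ZMod 2) v, h2, zero_smul]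

lemma addHom_zmod2_smul {M N : Type*} [AddCommGroup M] [AddCommGroup N]
    [Module (ZMod 2) M] [Module (ZMod 2) N] (f : M →+ N) (c : ZMod 2) (x : M) :
    f (c • x) = c • f x := by
  rcases zmod2_cases c with h | h <;> subst h <;> simp

lemma rank_le_maxrk {F : Type} [Field F] {a b : ℕ}
    (𝒜 : Submodule F (Matrix (Fin a) (Fin b) F)) {M : Matrix (Fin a) (Fin b) F}
    (hM : M ∈ 𝒜) : M.rank ≤ maxrk 𝒜 := by
  apply le_csSup
  · exact ⟨b, fun k hk => by obtain ⟨N, _, rfl⟩ := hk; exact N.rank_le_width⟩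
  · exact ⟨M, hM, rfl⟩

lemma kernel_count {m n : ℕ} (M : Matrix (Fin m) (Fin n) (ZMod 2)) :
    ∃ d : ℕ, M.rank + d = n ∧
      (Finset.univ.filter (fun x : Fin n → ZMod 2 => M *ᵥ x = 0)).card = 2 ^ d := by
  classical
  refine ⟨Module.finrank (ZMod 2) (LinearMap.ker M.mulVecLin), ?_, ?_⟩
  · have h := LinearMap.finrank_range_add_finrank_ker M.mulVecLin
    rw [Module.finrank_pi] at h
    simpa [Matrix.rank, Fintype.card_fin] using h
  · have hcard : Fintype.card (LinearMap.ker M.mulVecLin) =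
        2 ^ Module.finrank (ZMod 2) (LinearMap.ker M.mulVecLin) := by
      have := Module.card_eq_pow_finrank (K := ZMod 2) (V := LinearMap.ker M.mulVecLin)
      simpa [ZMod.card] using this
    rw [← hcard, Fintype.card_subtype]
    congr 1
    ext x
    simp [LinearMap.mem_ker, Matrix.mulVecLin_apply]

/-- The key double-counting argument: if `W` consists of matrices of rank exactly `t`
(except `0`), and adding a fixed rank-`t` matrix `C` strictly drops the rank of every
nonzero element of `W`, then `W` is small. -/
lemma counting {m n t : ℕ} (htn : t ≤ n)
    (W : Submodule (ZMod 2) (Matrix (Fin m) (Fin n) (ZMod 2)))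
    (C : Matrix (Fin m) (Fin n) (ZMod 2)) (hC : C.rank = t)
    (h1 : ∀ w ∈ W, w ≠ 0 → w.rank = t)
    (h2 : ∀ w ∈ W, w ≠ 0 → (C + w).rank < t) :
    Module.finrank (ZMod 2) W ≤ t := by
  classical
  set WS : Finset (Matrix (Fin m) (Fin n) (ZMod 2)) :=
    Finset.univ.filter (fun w => w ∈ W) with hWS
  have hmem : ∀ w, w ∈ WS ↔ w ∈ W := by intro w; simp [hWS]
  have hcard : WS.card = 2 ^ Module.finrank (ZMod 2) W := by
    rw [← Fintype.card_subtype]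
    have := Module.card_eq_pow_finrank (K := ZMod 2) (V := W)
    simpa [ZMod.card] using this
  have swap : ∀ F : Matrix (Fin m) (Fin n) (ZMod 2) → (Fin n → ZMod 2) → Prop,
      ∀ _ : ∀ w x, Decidable (F w x),
      (∑ w ∈ WS, (Finset.univ.filter (fun x => F w x)).card)
        = ∑ x : Fin n → ZMod 2, (WS.filter (fun w => F w x)).card := by
    intro F _
    simp only [Finset.card_filter]
    exact Finset.sum_comm
  have point : ∀ x : Fin n → ZMod 2,
      (WS.filter (fun w => (C + w) *ᵥ x = 0)).card ≤
        (WS.filter (fun w => w *ᵥ x = 0)).card := by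
    intro x
    by_cases hS : (WS.filter (fun w => (C + w) *ᵥ x = 0)).Nonempty
    · obtain ⟨w₀, hw₀⟩ := hS
      rw [Finset.mem_filter] at hw₀
      apply Finset.card_le_card_of_injOn (fun w => w + w₀)
      · intro w hw
        rw [Finset.mem_coe, Finset.mem_filter] at hw ⊢
        constructor
        · rw [hmem]; exact W.add_mem ((hmem w).mp hw.1) ((hmem w₀).mp hw₀.1)
        · have key : (C + w) *ᵥ x + (C + w₀) *ᵥ x = (w + w₀) *ᵥ x := by
            rw [Matrix.add_mulVec, Matrix.add_mulVec, Matrix.add_mulVec]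
            have hCC : C *ᵥ x + C *ᵥ x = 0 := zmod2_add_self _
            calc C *ᵥ x + w *ᵥ x + (C *ᵥ x + w₀ *ᵥ x)
                = (C *ᵥ x + C *ᵥ x) + (w *ᵥ x + w₀ *ᵥ x) := by abel
              _ = w *ᵥ x + w₀ *ᵥ x := by rw [hCC, zero_add]
          rw [← key, hw.2, hw₀.2, add_zero]
      · intro a _ b _ hab
        exact add_right_cancel hab
    · rw [Finset.not_nonempty_iff_eq_empty] at hS
      simp [hS]
  have main : (∑ w ∈ WS, (Finset.univ.filter (fun x => (C + w) *ᵥ x = 0)).card)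
      ≤ ∑ w ∈ WS, (Finset.univ.filter (fun x => w *ᵥ x = 0)).card := by
    rw [swap _ (fun w x => inferInstance), swap _ (fun w x => inferInstance)]
    exact Finset.sum_le_sum (fun x _ => point x)
  have h0 : (0 : Matrix (Fin m) (Fin n) (ZMod 2)) ∈ WS := (hmem 0).mpr W.zero_mem
  set E := WS.erase 0 with hE
  have hcardE : E.card + 1 = WS.card := Finset.card_erase_add_one h0
  set A := 2 ^ (n - t) with hA
  have lhs_lower : A + E.card * (A + A) ≤
      ∑ w ∈ WS, (Finset.univ.filter (fun x => (C + w) *ᵥ x = 0)).card := by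
    rw [← Finset.add_sum_erase _ _ h0, ← hE]
    apply Nat.add_le_add
    · obtain ⟨d, hd1, hd2⟩ := kernel_count (C + 0)
      rw [add_zero, hC] at hd1
      rw [hd2, hA]
      exact Nat.pow_le_pow_right (by norm_num) (by omega)
    · calc E.card * (A + A) = ∑ _w ∈ E, (A + A) := by rw [Finset.sum_const, smul_eq_mul]
        _ ≤ _ := by
          apply Finset.sum_le_sum
          intro w hw
          have hwW : w ∈ W := (hmem w).mp (Finset.mem_of_mem_erase hw)
          have hwne : w ≠ 0 := Finset.ne_of_mem_erase hw
          obtain ⟨d, hd1, hd2⟩ := kernel_count (C + w)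
          rw [hd2]
          have hr : (C + w).rank < t := h2 w hwW hwne
          have hdge : n - t + 1 ≤ d := by omega
          calc A + A = 2 ^ (n - t + 1) := by rw [hA, pow_succ]; ring
            _ ≤ 2 ^ d := Nat.pow_le_pow_right (by norm_num) hdge
  have rhs_upper : (∑ w ∈ WS, (Finset.univ.filter (fun x => w *ᵥ x = 0)).card)
      ≤ 2 ^ n + E.card * A := by
    rw [← Finset.add_sum_erase _ _ h0, ← hE]
    apply Nat.add_le_add
    · obtain ⟨d, hd1, hd2⟩ := kernel_count (0 : Matrix (Fin m) (Fin n) (ZMod 2))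
      rw [Matrix.rank_zero] at hd1
      rw [hd2]
      exact Nat.pow_le_pow_right (by norm_num) (by omega)
    · calc (∑ w ∈ E, (Finset.univ.filter (fun x => w *ᵥ x = 0)).card)
          ≤ ∑ _w ∈ E, A := by
            apply Finset.sum_le_sum
            intro w hw
            have hwW : w ∈ W := (hmem w).mp (Finset.mem_of_mem_erase hw)
            have hwne : w ≠ 0 := Finset.ne_of_mem_erase hw
            obtain ⟨d, hd1, hd2⟩ := kernel_count w
            rw [h1 w hwW hwne] at hd1
            rw [hd2, hA]
            exact Nat.pow_le_pow_right (by norm_num) (by omega)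
        _ = E.card * A := by rw [Finset.sum_const, smul_eq_mul]
  have chain := le_trans lhs_lower (le_trans main rhs_upper)
  have final : WS.card * A ≤ 2 ^ n := by
    rw [← hcardE]
    have expand : E.card * (A + A) = E.card * A + E.card * A := by ring
    have expand2 : (E.card + 1) * A = E.card * A + A := by ring
    omega
  rw [hcard] at final
  have pow_ineq : (2:ℕ) ^ (Module.finrank (ZMod 2) W + (n - t)) ≤ 2 ^ (t + (n - t)) := by
    rw [pow_add, pow_add, ← hA]
    calc 2 ^ Module.finrank (ZMod 2) W * A ≤ 2 ^ n := final
      _ = 2 ^ t * 2 ^ (n - t) := by rw [← pow_add]; congr 1; omega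
      _ = 2 ^ t * A := by rw [hA]
  have := (Nat.pow_le_pow_iff_right (by norm_num : 1 < 2)).mp pow_ineq
  omega

/-- Existence of a (Delsarte–Gabidulin) code of `𝔽₂`-dimension `m (n - t + 1)` all of whose
nonzero elements have rank at least `t`. -/
lemma gabidulin (m n t : ℕ) (ht : 1 ≤ t) (htn : t ≤ n) (hnm : n ≤ m) :
    ∃ 𝒟 : Submodule (ZMod 2) (Matrix (Fin m) (Fin n) (ZMod 2)),
      m * (n - t + 1) = Module.finrank (ZMod 2) 𝒟 ∧
      ∀ M ∈ 𝒟, M ≠ 0 → t ≤ M.rank := by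
  classical
  haveI fact2 : Fact (Nat.Prime 2) := ⟨Nat.prime_two⟩
  have hm0 : m ≠ 0 := by omega
  set K := GaloisField 2 m with hK
  haveI : Fintype K := Fintype.ofFinite K
  have hfr : Module.finrank (ZMod 2) K = m := GaloisField.finrank 2 hm0
  let b : Module.Basis (Fin m) (ZMod 2) K := (Module.finBasis (ZMod 2) K).reindex (finCongr hfr)
  let g : Fin n → K := fun j => b (Fin.castLE hnm j)
  have hg_li : LinearIndependent (ZMod 2) g :=
    b.linearIndependent.comp _ (Fin.castLE_injective hnm)
  set k := n - t + 1 with hk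
  let fa : (Fin k → K) → K → K := fun a y => ∑ i : Fin k, a i * y ^ (2 ^ (i : ℕ))
  let pa : (Fin k → K) → Polynomial K :=
    fun a => ∑ i : Fin k, Polynomial.monomial (2 ^ (i : ℕ)) (a i)
  have heval : ∀ a y, (pa a).eval y = fa a y := by
    intro a y
    simp [pa, fa, Polynomial.eval_finset_sum, Polynomial.eval_monomial]
  have hfa_add : ∀ a y z, fa a (y + z) = fa a y + fa a z := by
    intro a y z
    simp only [fa]
    rw [← Finset.sum_add_distrib]
    apply Finset.sum_congr rfl
    intro i _
    rw [add_pow_char_pow, mul_add]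
  have hpa_ne : ∀ a, a ≠ 0 → pa a ≠ 0 := by
    intro a ha
    obtain ⟨i, hi⟩ : ∃ i, a i ≠ 0 := by
      by_contra h
      push_neg at h
      exact ha (funext h)
    intro hzero
    have hcoeff : (pa a).coeff (2 ^ (i : ℕ)) = a i := by
      simp only [pa, Polynomial.finset_sum_coeff, Polynomial.coeff_monomial]
      rw [Finset.sum_eq_single i]
      · simp
      · intro j _ hji
        have : (2:ℕ) ^ (j:ℕ) ≠ 2 ^ (i:ℕ) := by
          intro h
          exact hji (Fin.ext (Nat.pow_right_injective (le_refl 2) h))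
        simp [this]
      · simp
    rw [hzero] at hcoeff
    simp at hcoeff
    exact hi hcoeff.symm
  have hdeg : ∀ a, (pa a).natDegree ≤ 2 ^ (n - t) := by
    intro a
    apply Polynomial.natDegree_sum_le_of_forall_le
    intro i _
    refine le_trans (Polynomial.natDegree_monomial_le _) ?_
    apply Nat.pow_le_pow_right (by norm_num)
    have := i.isLt
    omega
  let ha : (Fin k → K) → (K →ₗ[ZMod 2] K) := fun a =>
    { toFun := fa a
      map_add' := hfa_add a
      map_smul' := fun c x => addHom_zmod2_smul (AddMonoidHom.mk' (fa a) (hfa_add a)) c x }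
  let ι : (Fin n → ZMod 2) →ₗ[ZMod 2] K := Fintype.linearCombination (ZMod 2) g
  have hι_apply : ∀ x, ι x = ∑ j, x j • g j := fun x => rfl
  have hι_inj : Function.Injective ι := by
    intro x y hxy
    have hsub : ι (x - y) = 0 := by rw [map_sub, hxy, sub_self]
    have := Fintype.linearIndependent_iff.mp hg_li (x - y) (by
      rw [← hι_apply]; exact hsub)
    funext j
    have h2 : x j - y j = 0 := this j
    exact sub_eq_zero.mp h2
  let u : (Fin k → K) → ((Fin n → ZMod 2) →ₗ[ZMod 2] K) := fun a => (ha a).comp ι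
  let T : (Fin k → K) → ((Fin n → ZMod 2) →ₗ[ZMod 2] (Fin m → ZMod 2)) :=
    fun a => (b.equivFun.toLinearMap).comp (u a)
  let Φ : (Fin k → K) → Matrix (Fin m) (Fin n) (ZMod 2) := fun a => LinearMap.toMatrix' (T a)
  have hmulVecLin : ∀ a, (Φ a).mulVecLin = T a := by
    intro a
    rw [← Matrix.toLin'_apply', Matrix.toLin'_toMatrix']
  have hrank_eq : ∀ a, (Φ a).rank = Module.finrank (ZMod 2) (LinearMap.range (u a)) := by
    intro a
    rw [Matrix.rank, hmulVecLin]
    show Module.finrank (ZMod 2) (LinearMap.range ((b.equivFun.toLinearMap).comp (u a))) = _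
    rw [LinearMap.range_comp]
    exact LinearEquiv.finrank_map_eq b.equivFun _
  have hker_card : ∀ a, a ≠ 0 → Module.finrank (ZMod 2) (LinearMap.ker (u a)) ≤ n - t := by
    intro a hane
    have hroots : ∀ x : (Fin n → ZMod 2), x ∈ LinearMap.ker (u a) →
        ι x ∈ (pa a).roots.toFinset := by
      intro x hx
      rw [Multiset.mem_toFinset, Polynomial.mem_roots']
      refine ⟨hpa_ne a hane, ?_⟩
      show Polynomial.eval (ι x) (pa a) = 0
      rw [heval]
      exact hx
    have hcardle : Fintype.card (LinearMap.ker (u a)) ≤ 2 ^ (n - t) := by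
      have hinj : Function.Injective (fun x : LinearMap.ker (u a) =>
          (⟨ι x.1, hroots x.1 x.2⟩ : {y // y ∈ (pa a).roots.toFinset})) := by
        intro x y hxy
        exact Subtype.ext (hι_inj (congrArg Subtype.val hxy))
      have h1 := Fintype.card_le_of_injective _ hinj
      have h2 : Fintype.card {y // y ∈ (pa a).roots.toFinset} = (pa a).roots.toFinset.card :=
        Fintype.card_coe _
      have h3 : (pa a).roots.toFinset.card ≤ Multiset.card (pa a).roots :=
        Multiset.toFinset_card_le _
      have h4 := Polynomial.card_roots' (pa a)
      have h5 := hdeg a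
      omega
    have hcardeq : Fintype.card (LinearMap.ker (u a)) =
        2 ^ Module.finrank (ZMod 2) (LinearMap.ker (u a)) := by
      have := Module.card_eq_pow_finrank (K := ZMod 2) (V := LinearMap.ker (u a))
      simpa [ZMod.card] using this
    rw [hcardeq] at hcardle
    exact (Nat.pow_le_pow_iff_right (by norm_num : 1 < 2)).mp hcardle
  have hrank_ge : ∀ a, a ≠ 0 → t ≤ (Φ a).rank := by
    intro a hane
    have hrn := LinearMap.finrank_range_add_finrank_ker (u a)
    rw [Module.finrank_pi, Fintype.card_fin] at hrn
    have := hker_card a hane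
    rw [hrank_eq]
    omega
  have hT0 : T 0 = 0 := by
    apply LinearMap.ext
    intro x
    show b.equivFun (fa 0 (ι x)) = 0
    have hz : fa 0 (ι x) = 0 := by simp [fa]
    rw [hz, map_zero]
  have hΦ0 : Φ 0 = 0 := by
    show LinearMap.toMatrix' (T 0) = 0
    rw [hT0, map_zero]
  have hΦ_add : ∀ a a', Φ (a + a') = Φ a + Φ a' := by
    intro a a'
    have hT : T (a + a') = T a + T a' := by
      apply LinearMap.ext
      intro x
      show b.equivFun (fa (a + a') (ι x)) = b.equivFun (fa a (ι x)) + b.equivFun (fa a' (ι x))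
      rw [← map_add]
      congr 1
      show ∑ i : Fin k, (a i + a' i) * (ι x) ^ 2 ^ (i : ℕ) = _
      rw [← Finset.sum_add_distrib]
      exact Finset.sum_congr rfl fun i _ => add_mul _ _ _
    show LinearMap.toMatrix' (T (a + a')) = _
    rw [hT, map_add]
  let Ψ : (Fin k → K) →ₗ[ZMod 2] Matrix (Fin m) (Fin n) (ZMod 2) :=
    { toFun := Φ
      map_add' := hΦ_add
      map_smul' := by
        intro c a
        rcases zmod2_cases c with h | h <;> subst h
        · simp [hΦ0]
        · simp }
  have hΨ_inj : Function.Injective Ψ := by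
    intro a a' haa
    by_contra hne
    have hsub : Ψ (a - a') = 0 := by rw [map_sub, haa, sub_self]
    have hane : a - a' ≠ 0 := sub_ne_zero.mpr hne
    have hge := hrank_ge (a - a') hane
    have hz : Φ (a - a') = 0 := hsub
    rw [hz, Matrix.rank_zero] at hge
    omega
  refine ⟨LinearMap.range Ψ, ?_, ?_⟩
  · rw [LinearMap.finrank_range_of_inj hΨ_inj]
    have hrk : Module.finrank (ZMod 2) (Fin k → K) = k * m := by
      rw [Module.finrank_pi_fintype]
      simp [hfr]
    rw [hrk, hk]
    ring
  · rintro M ⟨a, rfl⟩ hMne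
    have hane : a ≠ 0 := by
      rintro rfl
      exact hMne (map_zero Ψ)
    exact hrank_ge a hane

/-- Over `𝔽₂`, every invertible square matrix of size at least `2` is the sum of two
invertible matrices. -/
lemma inv_sum (m : ℕ) (hm : 2 ≤ m) (C : Matrix (Fin m) (Fin m) (ZMod 2)) (hC : C.rank = m) :
    ∃ B₁ B₂ : Matrix (Fin m) (Fin m) (ZMod 2), B₁.rank = m ∧ B₂.rank = m ∧ C = B₁ + B₂ := by
  classical
  haveI fact2 : Fact (Nat.Prime 2) := ⟨Nat.prime_two⟩
  have hm0 : m ≠ 0 := by omega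
  set K := GaloisField 2 m with hK
  haveI : Fintype K := Fintype.ofFinite K
  have hfr : Module.finrank (ZMod 2) K = m := GaloisField.finrank 2 hm0
  let b : Module.Basis (Fin m) (ZMod 2) K := (Module.finBasis (ZMod 2) K).reindex (finCongr hfr)
  obtain ⟨α, hα0, hα1⟩ : ∃ α : K, α ≠ 0 ∧ α ≠ 1 := by
    by_contra h
    push_neg at h
    have hsub : (Finset.univ : Finset K) ⊆ {0, 1} := by
      intro x _
      simp only [Finset.mem_insert, Finset.mem_singleton]
      by_cases hx : x = 0
      · exact Or.inl hx
      · exact Or.inr (h x hx)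
    have hcard := Finset.card_le_card hsub
    have hle : Fintype.card K ≤ 2 := by
      refine le_trans ?_ (le_trans hcard ?_)
      · exact le_of_eq (Finset.card_univ).symm
      · exact le_trans (Finset.card_insert_le _ _) (by simp)
    have hKcard := Module.card_eq_pow_finrank (K := ZMod 2) (V := K)
    rw [ZMod.card, hfr] at hKcard
    have h4 : 4 ≤ Fintype.card K := by
      rw [hKcard]
      calc (4:ℕ) = 2 ^ 2 := rfl
        _ ≤ 2 ^ m := Nat.pow_le_pow_right (by norm_num) hm
    omega
  have hβ0 : (1 : K) + α ≠ 0 := by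
    intro h
    have h1 : (1 : K) = -α := add_eq_zero_iff_eq_neg.mp h
    rw [CharTwo.neg_eq] at h1
    exact hα1 h1.symm
  let μ : K → (K →ₗ[ZMod 2] K) := fun c => LinearMap.mulLeft (ZMod 2) c
  let P : Matrix (Fin m) (Fin m) (ZMod 2) := LinearMap.toMatrix b b (μ α)
  let P' : Matrix (Fin m) (Fin m) (ZMod 2) := LinearMap.toMatrix b b (μ α⁻¹)
  let Q : Matrix (Fin m) (Fin m) (ZMod 2) := LinearMap.toMatrix b b (μ (1 + α))
  let Q' : Matrix (Fin m) (Fin m) (ZMod 2) := LinearMap.toMatrix b b (μ (1 + α)⁻¹)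
  have hmulmat : ∀ c c' : K, (LinearMap.toMatrix b b (μ c)) * (LinearMap.toMatrix b b (μ c'))
      = LinearMap.toMatrix b b (μ (c * c')) := by
    intro c c'
    rw [← LinearMap.toMatrix_comp b b b, ← LinearMap.mulLeft_mul]
  have hone : LinearMap.toMatrix b b (μ 1) = 1 := by
    show LinearMap.toMatrix b b (LinearMap.mulLeft (ZMod 2) (1:K)) = 1
    rw [LinearMap.mulLeft_one, LinearMap.toMatrix_id]
  have hPunit : IsUnit P := by
    refine isUnit_iff_exists.mpr ⟨P', ?_, ?_⟩
    · rw [hmulmat, mul_inv_cancel₀ hα0, hone]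
    · rw [hmulmat, inv_mul_cancel₀ hα0, hone]
  have hQunit : IsUnit Q := by
    refine isUnit_iff_exists.mpr ⟨Q', ?_, ?_⟩
    · rw [hmulmat, mul_inv_cancel₀ hβ0, hone]
    · rw [hmulmat, inv_mul_cancel₀ hβ0, hone]
  have hPQ : P + Q = 1 := by
    have hadd : μ α + μ (1 + α) = μ 1 := by
      apply LinearMap.ext
      intro x
      show α * x + (1 + α) * x = 1 * x
      rw [← add_mul]
      congr 1
      rw [add_comm α (1 + α), add_assoc, CharTwo.add_self_eq_zero, add_zero]
    show LinearMap.toMatrix b b (μ α) + LinearMap.toMatrix b b (μ (1 + α)) = 1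
    rw [← map_add, hadd, hone]
  refine ⟨C * P, C * Q, ?_, ?_, ?_⟩
  · rw [Matrix.rank_mul_eq_left_of_isUnit_det P C ((Matrix.isUnit_iff_isUnit_det P).mp hPunit)]
    exact hC
  · rw [Matrix.rank_mul_eq_left_of_isUnit_det Q C ((Matrix.isUnit_iff_isUnit_det Q).mp hQunit)]
    exact hC
  · rw [← Matrix.mul_add, hPQ, Matrix.mul_one]

end Auxiliary

/-- In an optimal binary rank-metric anticode with `m ≥ 2`, every element of
maximum rank `t` is the sum of two elements of rank `t` of the anticode. -/
theorem statement6 (m n t : ℕ) (hm : 2 ≤ m) (hn : 1 ≤ n) (hnm : n ≤ m)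
    (𝒞 : Submodule (ZMod 2) (Matrix (Fin m) (Fin n) (ZMod 2)))
    (hopt : Module.finrank (ZMod 2) 𝒞 = m * maxrk 𝒞)
    (ht : maxrk 𝒞 = t) :
    ∀ C ∈ 𝒞, C.rank = t →
      ∃ B₁ ∈ 𝒞, ∃ B₂ ∈ 𝒞, B₁.rank = t ∧ B₂.rank = t ∧ C = B₁ + B₂ := by
  intro C hC hrkC
  have hrankle : ∀ M ∈ 𝒞, M.rank ≤ t := by
    intro M hM
    rw [← ht]
    exact rank_le_maxrk 𝒞 hM
  by_cases ht0 : t = 0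
  · refine ⟨C, hC, 0, 𝒞.zero_mem, hrkC, ?_, ?_⟩
    · rw [Matrix.rank_zero, ht0]
    · rw [add_zero]
  · have ht1 : 1 ≤ t := by omega
    have htn : t ≤ n := by
      have := C.rank_le_width
      omega
    by_cases htm : t = m
    · -- square case: the anticode is everything and C is invertible
      have hnm' : n = m := by omega
      subst hnm'
      have htop : 𝒞 = ⊤ := by
        apply Submodule.eq_top_of_finrank_eq
        rw [hopt, ht, htm]
        rw [Module.finrank_matrix]
        simp [Fintype.card_fin]
      obtain ⟨B₁, B₂, h1, h2, h3⟩ := inv_sum n (by omega) C (by omega)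
      exact ⟨B₁, htop ▸ Submodule.mem_top, B₂, htop ▸ Submodule.mem_top,
        by omega, by omega, h3⟩
    · -- main case: t < m
      have htm' : t < m := by omega
      obtain ⟨𝒟, hD_dim, hD_rank⟩ := gabidulin m n t ht1 htn hnm
      set W := 𝒞 ⊓ 𝒟 with hW
      have hWge : m ≤ Module.finrank (ZMod 2) W := by
        have hsum := Submodule.finrank_sup_add_finrank_inf_eq 𝒞 𝒟
        rw [← hW] at hsum
        have hsup_le : Module.finrank (ZMod 2) ↥(𝒞 ⊔ 𝒟) ≤ m * n := by
          refine le_trans (Submodule.finrank_le _) ?_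
          rw [Module.finrank_matrix]
          simp [Fintype.card_fin]
        have hCdim : Module.finrank (ZMod 2) 𝒞 = m * t := by rw [hopt, ht]
        have hkey : m * t + m * (n - t + 1) = m * n + m := by
          rw [← Nat.mul_add]
          have : t + (n - t + 1) = n + 1 := by omega
          rw [this]
          ring
        omega
      by_cases hgood : ∃ w ∈ W, w ≠ 0 ∧ (C + w).rank = t
      · obtain ⟨w, hwW, hwne, hrkCw⟩ := hgood
        have hw𝒞 : w ∈ 𝒞 := hwW.1
        have hw𝒟 : w ∈ 𝒟 := hwW.2
        have hrkw : w.rank = t :=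
          le_antisymm (hrankle w hw𝒞) (hD_rank w hw𝒟 hwne)
        refine ⟨w, hw𝒞, C + w, 𝒞.add_mem hC hw𝒞, hrkw, hrkCw, ?_⟩
        have hww : w + w = 0 := zmod2_add_self w
        calc C = C + (w + w) := by rw [hww, add_zero]
          _ = w + (C + w) := by abel
      · push_neg at hgood
        exfalso
        have hcount := counting htn W C hrkC
          (fun w hw hwne => le_antisymm (hrankle w hw.1) (hD_rank w hw.2 hwne))
          (fun w hw hwne => lt_of_le_of_ne (hrankle _ (𝒞.add_mem hC hw.1)) (hgood w hw hwne))
        omega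
end

section
/- Let 𝒞 ⊆ F_2^ℓ be an F_2-linear code with dim(𝒞) = t such that the maximum Hamming weight of an element of 𝒞 equals t (i.e., 𝒞 is an optimal Hamming-metric anticode of dimension t). Then 𝒞 is spanned as an F_2-vector space by its elements of Hamming weight t together with its elements of Hamming weight t−1. -/
open Finset

private lemma zmod2_eq_one : ∀ {x : ZMod 2}, x ≠ 0 → x = 1 := by decide

/-- An optimal binary Hamming-metric anticode of dimension `t` is spanned by its
elements of Hamming weight `t` together with its elements of Hamming weight `t - 1`. -/
theorem statement8 (ℓ t : ℕ)
    (𝒞 : Submodule (ZMod 2) (Fin ℓ → ZMod 2))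
    (hdim : Module.finrank (ZMod 2) 𝒞 = t)
    (hmax : sSup {w | ∃ c ∈ 𝒞, hammingNorm c = w} = t) :
    Submodule.span (ZMod 2)
        {c | c ∈ 𝒞 ∧ (hammingNorm c = t ∨ hammingNorm c = t - 1)} = 𝒞 := by
  classical
  have hbdd : BddAbove {w | ∃ c ∈ 𝒞, hammingNorm c = w} := by
    refine ⟨ℓ, ?_⟩
    rintro w ⟨c, -, rfl⟩
    simpa using (hammingNorm_le_card_fintype : hammingNorm c ≤ Fintype.card (Fin ℓ))
  have hub : ∀ c ∈ 𝒞, hammingNorm c ≤ t := fun c hc =>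
    hmax ▸ le_csSup hbdd ⟨c, hc, rfl⟩
  have hmem : t ∈ {w | ∃ c ∈ 𝒞, hammingNorm c = w} := by
    rw [← hmax]
    exact Nat.sSup_mem ⟨0, 0, zero_mem _, hammingNorm_zero⟩ hbdd
  obtain ⟨m, hm, hmt⟩ := hmem
  -- injectivity of restriction to the support of m
  have hinj : ∀ c ∈ 𝒞, (∀ i, m i ≠ 0 → c i = 0) → c = 0 := by
    intro c hc h0
    by_contra hne
    have hdisj : ∀ i : Fin ℓ, (m + c) i ≠ 0 ↔ (m i ≠ 0 ∨ c i ≠ 0) := by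
      intro i
      rcases eq_or_ne (m i) 0 with h | h
      · simp [h]
      · simp [h, h0 i h]
    have hadd : hammingNorm (m + c) = hammingNorm m + hammingNorm c := by
      unfold hammingNorm
      rw [← Finset.card_union_of_disjoint]
      · congr 1
        ext i
        simpa using hdisj i
      · rw [Finset.disjoint_filter]
        intro i _ hmi hci
        exact hci (h0 i hmi)
    have h1 : hammingNorm (m + c) ≤ t := hub _ (add_mem hm hc)
    have h2 : 0 < hammingNorm c := hammingNorm_pos_iff.2 hne
    omega
  set K := {i : Fin ℓ // m i ≠ 0} with hKdef
  have hKcard : Fintype.card K = t := by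
    rw [← hmt]
    exact Fintype.card_subtype _
  let φ : 𝒞 →ₗ[ZMod 2] (K → ZMod 2) :=
    { toFun := fun c i => c.1 i.1
      map_add' := fun a b => rfl
      map_smul' := fun r a => rfl }
  have hφinj : Function.Injective φ := by
    intro a b hab
    have hsz : (a : Fin ℓ → ZMod 2) - b = 0 := by
      refine hinj _ (sub_mem a.2 b.2) fun i hi => ?_
      have := congrFun hab ⟨i, hi⟩
      have this' : a.1 i = b.1 i := this
      simpa [sub_eq_zero] using this'
    exact Subtype.ext (sub_eq_zero.mp hsz)
  have hφsurj : Function.Surjective φ := by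
    have hfr : Module.finrank (ZMod 2) 𝒞 = Module.finrank (ZMod 2) (K → ZMod 2) := by
      rw [hdim, Module.finrank_pi, hKcard]
    exact (LinearMap.injective_iff_surjective_of_finrank_eq_finrank hfr).1 hφinj
  -- for each j, choose a codeword looking like "all ones on supp m except at j"
  have hg : ∀ j : Fin ℓ, ∃ g : Fin ℓ → ZMod 2, g ∈ 𝒞 ∧
      (hammingNorm g = t ∨ hammingNorm g = t - 1) ∧
      (m j ≠ 0 → ∀ i, m i ≠ 0 → g i = if i = j then 0 else 1) := by
    intro j
    by_cases hj : m j ≠ 0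
    · obtain ⟨g, hgφ⟩ := hφsurj (fun i : K => if (i : Fin ℓ) = j then 0 else 1)
      have hgprop : ∀ i, m i ≠ 0 → (g : Fin ℓ → ZMod 2) i = if i = j then 0 else 1 :=
        fun i hi => congrFun hgφ ⟨i, hi⟩
      refine ⟨g, g.2, ?_, fun _ => hgprop⟩
      have hle : hammingNorm (g : Fin ℓ → ZMod 2) ≤ t := hub _ g.2
      have hge : t - 1 ≤ hammingNorm (g : Fin ℓ → ZMod 2) := by
        have hsub : ({i | m i ≠ 0} : Finset (Fin ℓ)).erase j ⊆
            ({i | (g : Fin ℓ → ZMod 2) i ≠ 0} : Finset (Fin ℓ)) := by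
          intro i hi
          simp only [Finset.mem_erase, Finset.mem_filter, Finset.mem_univ, true_and] at hi ⊢
          rw [hgprop i hi.2, if_neg hi.1]
          exact one_ne_zero
        have hcards := Finset.card_le_card hsub
        have hce : (({i | m i ≠ 0} : Finset (Fin ℓ)).erase j).card = t - 1 := by
          rw [Finset.card_erase_of_mem (by simpa using hj)]
          rw [← hmt]; rfl
        rw [← hce]
        exact hcards
      omega
    · exact ⟨m, hm, Or.inl hmt, fun h => absurd h hj⟩
  choose g hg𝒞 hgwt hgval using hg
  apply le_antisymm
  · rw [Submodule.span_le]
    rintro c ⟨hc, -⟩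
    exact hc
  · intro c hc
    set T : Finset (Fin ℓ) := {j | m j ≠ 0 ∧ c j ≠ 0} with hTdef
    set c' : Fin ℓ → ZMod 2 := ∑ j ∈ T, (m + g j) with hc'def
    have hc'span : c' ∈ Submodule.span (ZMod 2)
        {c | c ∈ 𝒞 ∧ (hammingNorm c = t ∨ hammingNorm c = t - 1)} := by
      refine Submodule.sum_mem _ fun j _ => ?_
      exact add_mem (Submodule.subset_span ⟨hm, Or.inl hmt⟩)
        (Submodule.subset_span ⟨hg𝒞 j, hgwt j⟩)
    have hc'𝒞 : c' ∈ 𝒞 :=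
      Submodule.sum_mem _ fun j _ => add_mem hm (hg𝒞 j)
    have hzero : c + c' = 0 := by
      refine hinj _ (add_mem hc hc'𝒞) fun i hi => ?_
      have hc'i : c' i = if i ∈ T then 1 else 0 := by
        rw [hc'def, Finset.sum_apply]
        have hterm : ∀ j ∈ T, (m + g j) i = if i = j then 1 else 0 := by
          intro j hjT
          have hjm : m j ≠ 0 := by
            rw [hTdef] at hjT
            exact (Finset.mem_filter.mp hjT).2.1
          have hmi : m i = 1 := zmod2_eq_one hi
          rw [Pi.add_apply, hmi, hgval j hjm i hi]
          split_ifs <;> decide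
        rw [Finset.sum_congr rfl hterm]
        simp
      have hci : c i = if i ∈ T then 1 else 0 := by
        rcases eq_or_ne (c i) 0 with h | h
        · rw [h, if_neg]
          rw [hTdef]
          simp [h]
        · rw [zmod2_eq_one h, if_pos]
          rw [hTdef]
          simp [hi, h]
      rw [Pi.add_apply, hc'i, hci]
      split_ifs <;> decide
    have hcc' : c = c' := by
      have : c = -c' := eq_neg_of_add_eq_zero_left hzero
      rw [this]
      ext i
      simp [CharTwo.neg_eq]
    rw [hcc']
    exact hc'span
end

section
/- (Characterization of linear sum-rank isometries.) Let φ : 𝕄 → 𝕄 be an F_q-linear map with srk(φ(C)) = srk(C) for all C ∈ 𝕄. Then there exist a permutation σ of [ℓ] such that σ(i) = j implies m_i = m_j and n_i = n_j, and for each i ∈ [ℓ] an F_q-linear map ψ_i : F_q^{m_i×n_i} → F_q^{m_i×n_i} satisfying rk(ψ_i(A)) = rk(A) for all A ∈ F_q^{m_i×n_i}, such that φ(C_1,…,C_ℓ) = (ψ_1(C_{σ(1)}),…,ψ_ℓ(C_{σ(ℓ)})) for all (C_1,…,C_ℓ) ∈ 𝕄. -/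
open Matrix

section SumRankAux

open Module

variable {F : Type} [Field F]

lemma vecMulVec_mulVec {r s : ℕ} (u : Fin r → F) (v : Fin s → F) (w : Fin s → F) :
    (vecMulVec u v) *ᵥ w = (v ⬝ᵥ w) • u := by
  ext i
  simp [mulVec, vecMulVec, dotProduct, Finset.mul_sum, mul_assoc, mul_comm, mul_left_comm]

lemma rank_vecMulVec_le' {r s : ℕ} (u : Fin r → F) (v : Fin s → F) :
    (vecMulVec u v).rank ≤ 1 := by
  by_cases hu : u = 0
  · have : vecMulVec u v = 0 := by ext i j; simp [vecMulVec_apply, hu]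
    simp [this, Matrix.rank_zero]
  · have hle : LinearMap.range (vecMulVec u v).mulVecLin ≤ Submodule.span F {u} := by
      rintro x ⟨w, rfl⟩
      rw [mulVecLin_apply, _root_.vecMulVec_mulVec]
      exact Submodule.smul_mem _ _ (Submodule.mem_span_singleton_self u)
    calc (vecMulVec u v).rank ≤ finrank F (Submodule.span F {u}) :=
          Submodule.finrank_mono hle
      _ = 1 := finrank_span_singleton hu

lemma rank_eq_zero_iff' {r s : ℕ} (A : Matrix (Fin r) (Fin s) F) : A.rank = 0 ↔ A = 0 := by
  constructor
  · intro h
    have hbot : LinearMap.range A.mulVecLin = ⊥ := by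
      rwa [Matrix.rank, Submodule.finrank_eq_zero] at h
    ext i j
    have : A *ᵥ Pi.single j 1 = 0 := by
      have : A *ᵥ Pi.single j 1 ∈ LinearMap.range A.mulVecLin := ⟨_, rfl⟩
      rwa [hbot, Submodule.mem_bot] at this
    have := congrFun this i
    simpa [mulVec_single] using this
  · rintro rfl; exact Matrix.rank_zero

lemma rank_le_one_decomp {r s : ℕ} (A : Matrix (Fin r) (Fin s) F) (h : A.rank ≤ 1) :
    ∃ (u : Fin r → F) (v : Fin s → F), A = vecMulVec u v ∧ (A ≠ 0 → u ≠ 0 ∧ v ≠ 0) := by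
  by_cases hA : A = 0
  · exact ⟨0, 0, by ext i j; simp [hA, vecMulVec_apply], fun h' => absurd hA h'⟩
  · obtain ⟨i0, j0, hij⟩ : ∃ i j, A i j ≠ 0 := by
      by_contra hc; push_neg at hc; exact hA (by ext i j; simp [hc])
    set c0 : Fin r → F := fun i => A i j0 with hc0
    have hc0ne : c0 ≠ 0 := fun h0 => hij (by simpa [hc0] using congrFun h0 i0)
    have hc0mem : c0 ∈ LinearMap.range A.mulVecLin := by
      refine ⟨Pi.single j0 1, ?_⟩
      ext i; simp [mulVec_single, hc0]
    have hspan : Submodule.span F {c0} = LinearMap.range A.mulVecLin := by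
      apply Submodule.eq_of_le_of_finrank_le
      · rwa [Submodule.span_singleton_le_iff_mem]
      · rw [finrank_span_singleton hc0ne]; exact h
    have hcol : ∀ j, ∃ a : F, a • c0 = A *ᵥ Pi.single j 1 := by
      intro j
      have : A *ᵥ Pi.single j 1 ∈ Submodule.span F {c0} := by
        rw [hspan]; exact ⟨Pi.single j 1, rfl⟩
      rwa [Submodule.mem_span_singleton] at this
    choose v hv using hcol
    refine ⟨c0, v, ?_, ?_⟩
    · ext i j
      have := congrFun (hv j) i
      simp only [mulVec_single, mul_one, MulOpposite.op_one, one_smul, col_apply] at this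
      simp only [vecMulVec_apply]
      rw [mul_comm]
      simpa [Pi.smul_apply, smul_eq_mul] using this.symm ▸ rfl
    · intro _
      refine ⟨hc0ne, fun hv0 => ?_⟩
      have := congrFun (hv j0) i0
      simp only [mulVec_single, mul_one, hv0] at this
      exact hij (by simpa [hc0] using this.symm)

lemma rank_two_le {r s : ℕ} (u0 u1 : Fin r → F) (v0 v1 : Fin s → F)
    (hu : LinearIndependent F ![u0, u1]) (hv : LinearIndependent F ![v0, v1]) :
    2 ≤ (vecMulVec u0 v0 + vecMulVec u1 v1).rank := by
  set V : Matrix (Fin 2) (Fin s) F := Matrix.of ![v0, v1] with hV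
  have hVrank : V.rank = 2 := by
    have : LinearIndependent F V := hv
    simpa using this.rank_matrix
  have hsurj : Function.Surjective V.mulVecLin := by
    rw [← LinearMap.range_eq_top]
    apply Submodule.eq_top_of_finrank_eq
    rw [← Matrix.rank, hVrank]
    simp [finrank_pi]
  obtain ⟨w0, hw0⟩ := hsurj (Pi.single 0 1)
  obtain ⟨w1, hw1⟩ := hsurj (Pi.single 1 1)
  have hd00 : v0 ⬝ᵥ w0 = 1 := by
    have := congrFun hw0 0; simpa [mulVecLin_apply, mulVec, hV] using this
  have hd10 : v1 ⬝ᵥ w0 = 0 := by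
    have := congrFun hw0 1
    simpa [mulVecLin_apply, mulVec, hV, Pi.single_apply] using this
  have hd01 : v0 ⬝ᵥ w1 = 0 := by
    have := congrFun hw1 0
    simpa [mulVecLin_apply, mulVec, hV, Pi.single_apply] using this
  have hd11 : v1 ⬝ᵥ w1 = 1 := by
    have := congrFun hw1 1; simpa [mulVecLin_apply, mulVec, hV] using this
  set Y := vecMulVec u0 v0 + vecMulVec u1 v1 with hY
  have hu0mem : u0 ∈ LinearMap.range Y.mulVecLin := by
    refine ⟨w0, ?_⟩
    rw [mulVecLin_apply, hY, add_mulVec, _root_.vecMulVec_mulVec, _root_.vecMulVec_mulVec,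
      hd00, hd10]
    simp
  have hu1mem : u1 ∈ LinearMap.range Y.mulVecLin := by
    refine ⟨w1, ?_⟩
    rw [mulVecLin_apply, hY, add_mulVec, _root_.vecMulVec_mulVec, _root_.vecMulVec_mulVec,
      hd01, hd11]
    simp
  have hspan : Submodule.span F (Set.range ![u0, u1]) ≤ LinearMap.range Y.mulVecLin := by
    rw [Submodule.span_le]
    rintro x ⟨i, rfl⟩
    fin_cases i
    · exact hu0mem
    · exact hu1mem
  calc (2 : ℕ) = finrank F (Submodule.span F (Set.range ![u0, u1])) := by
        rw [finrank_span_eq_card hu]; simp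
    _ ≤ finrank F (LinearMap.range Y.mulVecLin) := Submodule.finrank_mono hspan
    _ = Y.rank := rfl

lemma vecMulVec_smul_left {r s : ℕ} (c : F) (u : Fin r → F) (v : Fin s → F) :
    vecMulVec (c • u) v = vecMulVec u (c • v) := by
  ext i j; simp [vecMulVec_apply, mul_assoc, mul_left_comm]

lemma vecMulVec_sub_right {r s : ℕ} (u : Fin r → F) (v w : Fin s → F) :
    vecMulVec u v - vecMulVec u w = vecMulVec u (v - w) := by
  ext i j; simp [vecMulVec_apply, mul_sub]

lemma vecMulVec_sub_left {r s : ℕ} (u w : Fin r → F) (v : Fin s → F) :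
    vecMulVec u v - vecMulVec w v = vecMulVec (u - w) v := by
  ext i j; simp [vecMulVec_apply, sub_mul]

lemma vecMulVec_add_right {r s : ℕ} (u : Fin r → F) (v w : Fin s → F) :
    vecMulVec u v + vecMulVec u w = vecMulVec u (v + w) := by
  ext i j; simp [vecMulVec_apply, mul_add]

lemma vecMulVec_add_left {r s : ℕ} (u w : Fin r → F) (v : Fin s → F) :
    vecMulVec u v + vecMulVec w v = vecMulVec (u + w) v := by
  ext i j; simp [vecMulVec_apply, add_mul]

lemma card_matrix_fin [Fintype F] (a b : ℕ) :
    Fintype.card (Matrix (Fin a) (Fin b) F) = Fintype.card F ^ (a * b) := by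
  have : Fintype.card (Matrix (Fin a) (Fin b) F) = Fintype.card (Fin a → Fin b → F) :=
    Fintype.card_congr (Equiv.refl _)
  rw [this, Fintype.card_fun, Fintype.card_fun]
  simp [← pow_mul, mul_comm]

/-- helper: pair not independent with both nonzero gives scalar relation -/
lemma pair_dep {V : Type*} [AddCommGroup V] [Module F V] {x y : V}
    (hx : x ≠ 0) (hy : y ≠ 0) (h : ¬ LinearIndependent F ![x, y]) :
    ∃ c : F, c ≠ 0 ∧ y = c • x := by
  rw [linearIndependent_fin2] at h
  push_neg at h
  obtain ⟨a, ha⟩ := h (by simpa using hy)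
  simp only [Matrix.cons_val_one, Matrix.head_cons, Matrix.cons_val_zero] at ha
  have ha0 : a ≠ 0 := fun h0 => hx (by rw [← ha, h0, zero_smul])
  refine ⟨a⁻¹, inv_ne_zero ha0, ?_⟩
  rw [← ha, ← smul_assoc, smul_eq_mul, inv_mul_cancel₀ ha0, one_smul]

lemma rankone_inj_le [Fintype F] {a r s : ℕ}
    (g : (Fin a → F) →ₗ[F] Matrix (Fin r) (Fin s) F)
    (hg : Function.Injective g) (h1 : ∀ u, (g u).rank ≤ 1) : a ≤ max r s := by
  rcases Nat.eq_zero_or_pos a with ha | ha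
  · omega
  have hq : 1 < Fintype.card F := Fintype.one_lt_card
  -- the base nonzero element
  have hsne : (Pi.single (⟨0, ha⟩ : Fin a) (1 : F) : Fin a → F) ≠ 0 := by
    intro h0
    have := congrFun h0 ⟨0, ha⟩
    simp at this
  have hX0ne : g (Pi.single ⟨0, ha⟩ 1) ≠ 0 := by
    intro h0
    exact hsne (hg (by rw [h0, map_zero]))
  obtain ⟨u0, v0, hX0, hnz⟩ := rank_le_one_decomp _ (h1 (Pi.single ⟨0, ha⟩ 1))
  obtain ⟨hu0, hv0⟩ := hnz hX0ne
  -- key dichotomy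
  have key : ∀ u, (∃ w, g u = vecMulVec u0 w) ∨ (∃ w, g u = vecMulVec w v0) := by
    intro u
    obtain ⟨u', v', hgu, h'⟩ := rank_le_one_decomp _ (h1 u)
    by_cases hz : g u = 0
    · exact Or.inl ⟨0, by ext i j; simp [hz, vecMulVec_apply]⟩
    obtain ⟨hu', hv'⟩ := h' hz
    by_contra hc
    push_neg at hc
    obtain ⟨hP, hQ⟩ := hc
    have hui : LinearIndependent F ![u0, u'] := by
      by_contra hdep
      obtain ⟨c, hc0, rfl⟩ := pair_dep hu0 hu' hdep
      exact hP (c • v') (by rw [hgu, vecMulVec_smul_left])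
    have hvi : LinearIndependent F ![v0, v'] := by
      by_contra hdep
      obtain ⟨c, hc0, rfl⟩ := pair_dep hv0 hv' hdep
      exact hQ (c • u') (by rw [hgu, ← vecMulVec_smul_left])
    have h2 : 2 ≤ (vecMulVec u0 v0 + vecMulVec u' v').rank := rank_two_le _ _ _ _ hui hvi
    have hle : (vecMulVec u0 v0 + vecMulVec u' v').rank ≤ 1 := by
      rw [← hX0, ← hgu, ← map_add]
      exact h1 _
    omega
  -- union of two subgroups
  have main : (∀ u, ∃ w, g u = vecMulVec u0 w) ∨ (∀ u, ∃ w, g u = vecMulVec w v0) := by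
    by_cases hP : ∀ u, ∃ w, g u = vecMulVec u0 w
    · exact Or.inl hP
    by_cases hQ : ∀ u, ∃ w, g u = vecMulVec w v0
    · exact Or.inr hQ
    exfalso
    push_neg at hP hQ
    obtain ⟨b, hb⟩ := hP
    obtain ⟨c, hc⟩ := hQ
    have hbQ : ∃ w, g b = vecMulVec w v0 := (key b).resolve_left (fun ⟨w, h⟩ => hb w h)
    have hcP : ∃ w, g c = vecMulVec u0 w := (key c).resolve_right (fun ⟨w, h⟩ => hc w h)
    rcases key (b + c) with ⟨w, hw⟩ | ⟨w, hw⟩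
    · obtain ⟨w2, hw2⟩ := hcP
      refine hb (w - w2) ?_
      have heq : g b = g (b + c) - g c := by rw [map_add]; abel
      rw [heq, hw, hw2, vecMulVec_sub_right]
    · obtain ⟨w2, hw2⟩ := hbQ
      refine hc (w - w2) ?_
      have heq : g c = g (b + c) - g b := by rw [map_add]; abel
      rw [heq, hw, hw2, vecMulVec_sub_left]
  -- now count
  rcases main with hP | hQ
  · obtain ⟨i1, hi1⟩ : ∃ i, u0 i ≠ 0 := by
      by_contra hc; push_neg at hc; exact hu0 (funext fun i => hc i)
    choose w hw using hP
    have hinj : Function.Injective w := by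
      intro u u' huu
      apply hg
      rw [hw, hw, huu]
    have := Fintype.card_le_of_injective _ hinj
    rw [Fintype.card_fun, Fintype.card_fun] at this
    simp only [Fintype.card_fin] at this
    have := (Nat.pow_le_pow_iff_right hq).mp this
    omega
  · obtain ⟨j1, hj1⟩ : ∃ j, v0 j ≠ 0 := by
      by_contra hc; push_neg at hc; exact hv0 (funext fun j => hc j)
    choose w hw using hQ
    have hinj : Function.Injective w := by
      intro u u' huu
      apply hg
      rw [hw, hw, huu]
    have := Fintype.card_le_of_injective _ hinj
    rw [Fintype.card_fun, Fintype.card_fun] at this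
    simp only [Fintype.card_fin] at this
    have := (Nat.pow_le_pow_iff_right hq).mp this
    omega

lemma rank_reindex' {a b a' b' : ℕ} (e1 : Fin a ≃ Fin a') (e2 : Fin b ≃ Fin b')
    (A : Matrix (Fin a) (Fin b) F) : (reindex e1 e2 A).rank = A.rank := by
  rw [Matrix.rank, Matrix.rank, mulVecLin_reindex, LinearMap.range_comp, LinearMap.range_comp,
    LinearEquiv.range, Submodule.map_top, LinearEquiv.finrank_map_eq]

lemma reindex_entry {ℓ : ℕ} {m n : Fin ℓ → ℕ}
    (D : ∀ k, Matrix (Fin (m k)) (Fin (n k)) F) {k i : Fin ℓ} (h : k = i) :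
    D i = reindex (finCongr (congrArg m h)) (finCongr (congrArg n h)) (D k) := by
  subst h; simp


end SumRankAux

/-- **Characterization of linear sum-rank isometries**: every linear map preserving
the sum-rank weight is obtained by permuting the blocks (preserving the block sizes)
and applying a linear rank-preserving map on each block. -/
theorem statement12 (q : ℕ) (hq : IsPrimePow q)
    (F : Type) [Field F] [Fintype F] (hF : Fintype.card F = q)
    (ℓ : ℕ) (hℓ : 1 ≤ ℓ) (m n : Fin ℓ → ℕ)
    (hm : ∀ i, 1 ≤ m i) (hn : ∀ i, 1 ≤ n i)
    (hmon : Antitone m) (hnm : ∀ i, n i ≤ m i)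
    (φ : (∀ i, Matrix (Fin (m i)) (Fin (n i)) F) →ₗ[F]
         (∀ i, Matrix (Fin (m i)) (Fin (n i)) F))
    (hφ : ∀ C, srk (φ C) = srk C) :
    ∃ (σ : Equiv.Perm (Fin ℓ)) (hm' : ∀ i, m (σ i) = m i) (hn' : ∀ i, n (σ i) = n i)
      (ψ : ∀ i, Matrix (Fin (m i)) (Fin (n i)) F →ₗ[F] Matrix (Fin (m i)) (Fin (n i)) F),
      (∀ i A, (ψ i A).rank = A.rank) ∧
      ∀ C : (∀ i, Matrix (Fin (m i)) (Fin (n i)) F), ∀ i,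
        φ C i = ψ i (Matrix.reindex (finCongr (hm' i)) (finCongr (hn' i)) (C (σ i))) := by
  classical
  have hq2 : (1 : ℕ) < Fintype.card F := Fintype.one_lt_card
  have hsrk0' : srk (0 : ∀ i, Matrix (Fin (m i)) (Fin (n i)) F) = 0 := by
    simp [srk, Matrix.rank_zero]
  have hsrk_zero : ∀ C : (∀ i, Matrix (Fin (m i)) (Fin (n i)) F), srk C = 0 → C = 0 := by
    intro C h
    simp only [srk] at h
    rw [Finset.sum_eq_zero_iff] at h
    funext i
    exact (rank_eq_zero_iff' (C i)).mp (h i (Finset.mem_univ i))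
  have hinj : Function.Injective φ := by
    intro C C' h
    have h1 : φ (C - C') = 0 := by rw [map_sub, h, sub_self]
    have h0 : srk (C - C') = 0 := by rw [← hφ, h1, hsrk0']
    exact sub_eq_zero.mp (hsrk_zero _ h0)
  have hsing : ∀ (j : Fin ℓ) (A : Matrix (Fin (m j)) (Fin (n j)) F),
      srk (Pi.single j A) = A.rank := by
    intro j A
    simp only [srk]
    rw [Finset.sum_eq_single j]
    · rw [Pi.single_eq_same]
    · intro b _ hb; rw [Pi.single_eq_of_ne hb, Matrix.rank_zero]
    · intro h; exact absurd (Finset.mem_univ j) h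
  have hrank1 : ∀ {r s : ℕ} (X : Matrix (Fin r) (Fin s) F), X ≠ 0 → 1 ≤ X.rank :=
    fun X hX => Nat.one_le_iff_ne_zero.mpr (fun h0 => hX ((rank_eq_zero_iff' X).mp h0))
  have huniq : ∀ (D : ∀ i, Matrix (Fin (m i)) (Fin (n i)) F), srk D ≤ 1 →
      ∀ i k, D i ≠ 0 → D k ≠ 0 → i = k := by
    intro D hD i k hi hk
    by_contra hik
    have hsub := Finset.sum_le_sum_of_subset
      (Finset.subset_univ ({i, k} : Finset (Fin ℓ))) (f := fun x => (D x).rank)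
    rw [Finset.sum_pair hik] at hsub
    have h1i := hrank1 (D i) hi
    have h1k := hrank1 (D k) hk
    have : 2 ≤ srk D := by
      calc 2 ≤ (D i).rank + (D k).rank := by omega
        _ ≤ ∑ x, (D x).rank := hsub
        _ = srk D := rfl
    omega
  -- base elements
  have hEne : ∀ j, (vecMulVec (Pi.single (⟨0, hm j⟩ : Fin (m j)) (1:F))
      (Pi.single (⟨0, hn j⟩ : Fin (n j)) (1:F))) ≠ 0 := by
    intro j h0
    have := congrFun (congrFun h0 ⟨0, hm j⟩) ⟨0, hn j⟩
    simp [vecMulVec_apply] at this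
  set E : ∀ j, Matrix (Fin (m j)) (Fin (n j)) F := fun j =>
    vecMulVec (Pi.single (⟨0, hm j⟩ : Fin (m j)) (1:F))
      (Pi.single (⟨0, hn j⟩ : Fin (n j)) (1:F)) with hE
  have hTex : ∀ j, ∃ i, φ (Pi.single j (E j)) i ≠ 0 := by
    intro j
    by_contra hc; push_neg at hc
    have h0 : φ (Pi.single j (E j)) = 0 := funext hc
    have h1 : srk (φ (Pi.single j (E j))) = 0 := by rw [h0, hsrk0']
    rw [hφ, hsing] at h1
    have hr := hrank1 (E j) (hEne j)
    omega
  choose τ hτ using hTex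
  have hsame : ∀ (j : Fin ℓ) (X Y : Matrix (Fin (m j)) (Fin (n j)) F),
      X.rank = 1 → Y.rank = 1 → (X + Y).rank ≤ 1 →
      ∀ i k, φ (Pi.single j X) i ≠ 0 → φ (Pi.single j Y) k ≠ 0 → i = k := by
    intro j X Y hX hY hXY i k hi hk
    by_cases hY' : Y = -X
    · subst hY'
      have hneg : (Pi.single j (-X) : ∀ k, Matrix (Fin (m k)) (Fin (n k)) F)
          = -(Pi.single j X) := by
        funext t
        rcases eq_or_ne t j with rfl | ht
        · simp [Pi.single_eq_same]
        · simp [Pi.single_eq_of_ne ht]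
      rw [hneg, map_neg] at hk
      have hk' : φ (Pi.single j X) k ≠ 0 := fun h => hk (by simp [h])
      exact huniq _ (le_of_eq (by rw [hφ, hsing, hX])) i k hi hk'
    · have hsum : srk (φ (Pi.single j X) + φ (Pi.single j Y)) ≤ 1 := by
        rw [← map_add, ← Pi.single_add, hφ, hsing]
        exact hXY
      by_contra hik
      have hYi : φ (Pi.single j Y) i = 0 := by
        by_contra hne
        exact hik (huniq _ (le_of_eq (by rw [hφ, hsing, hY])) i k hne hk)
      have hXk : φ (Pi.single j X) k = 0 := by
        by_contra hne
        exact hik (huniq _ (le_of_eq (by rw [hφ, hsing, hX])) i k hi hne)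
      have hDi : (φ (Pi.single j X) + φ (Pi.single j Y)) i ≠ 0 := by
        simpa [Pi.add_apply, hYi] using hi
      have hDk : (φ (Pi.single j X) + φ (Pi.single j Y)) k ≠ 0 := by
        simpa [Pi.add_apply, hXk] using hk
      exact hik (huniq _ hsum i k hDi hDk)
  have hsupp1 : ∀ (j : Fin ℓ) (X : Matrix (Fin (m j)) (Fin (n j)) F), X.rank ≤ 1 →
      ∀ i, φ (Pi.single j X) i ≠ 0 → i = τ j := by
    intro j X hX i hi
    by_cases hX0 : X = 0
    · exfalso; rw [hX0, Pi.single_zero, map_zero] at hi; exact hi rfl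
    obtain ⟨u, v, hXd, hnz⟩ := rank_le_one_decomp X hX
    obtain ⟨hu, hv⟩ := hnz hX0
    set B : Matrix (Fin (m j)) (Fin (n j)) F :=
      vecMulVec u (Pi.single (⟨0, hn j⟩ : Fin (n j)) (1:F)) with hB
    have hBne : B ≠ 0 := by
      obtain ⟨i1, hi1⟩ : ∃ i1, u i1 ≠ 0 := by
        by_contra hcc; push_neg at hcc; exact hu (funext fun x => hcc x)
      intro h0
      have := congrFun (congrFun h0 i1) ⟨0, hn j⟩
      simp [hB, vecMulVec_apply, hi1] at this
    have hXr : X.rank = 1 := le_antisymm hX (hrank1 X hX0)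
    have hBr : B.rank = 1 := le_antisymm (rank_vecMulVec_le' _ _) (hrank1 _ hBne)
    have hEr : (E j).rank = 1 := le_antisymm (rank_vecMulVec_le' _ _) (hrank1 _ (hEne j))
    have hXB : (X + B).rank ≤ 1 := by
      rw [hXd, hB, vecMulVec_add_right]; exact rank_vecMulVec_le' _ _
    have hBE : (B + E j).rank ≤ 1 := by
      rw [hB, hE, vecMulVec_add_left]; exact rank_vecMulVec_le' _ _
    obtain ⟨k, hk⟩ : ∃ k, φ (Pi.single j B) k ≠ 0 := by
      by_contra hc; push_neg at hc
      have h0 : φ (Pi.single j B) = 0 := funext hc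
      have h1 : srk (φ (Pi.single j B)) = 0 := by rw [h0, hsrk0']
      rw [hφ, hsing, hBr] at h1
      omega
    have h1 := hsame j X B hXr hBr hXB i k hi hk
    have h2 := hsame j B (E j) hBr hEr hBE k (τ j) hk (hτ j)
    rw [h1, h2]
  have hdecomp : ∀ (j : Fin ℓ) (A : Matrix (Fin (m j)) (Fin (n j)) F),
      A = ∑ c, vecMulVec (fun i => A i c) (Pi.single c (1:F)) := by
    intro j A
    ext i c0
    rw [Matrix.sum_apply]
    rw [Finset.sum_eq_single c0]
    · simp [vecMulVec_apply]
    · intro b _ hb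
      simp [vecMulVec_apply, Pi.single_eq_of_ne (Ne.symm hb)]
    · intro h; exact absurd (Finset.mem_univ _) h
  have hsupp : ∀ (j : Fin ℓ) (A : Matrix (Fin (m j)) (Fin (n j)) F) i,
      i ≠ τ j → φ (Pi.single j A) i = 0 := by
    intro j A i hi
    have hA := hdecomp j A
    rw [hA]
    have hsingle : (Pi.single j (∑ c, vecMulVec (fun i => A i c) (Pi.single c (1:F)))
          : ∀ k, Matrix (Fin (m k)) (Fin (n k)) F)
        = ∑ c, Pi.single j (vecMulVec (fun i => A i c) (Pi.single c (1:F))) := by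
      exact map_sum (LinearMap.single F (fun i => Matrix (Fin (m i)) (Fin (n i)) F) j)
        (fun c => vecMulVec (fun i => A i c) (Pi.single c (1:F))) Finset.univ
    rw [hsingle, map_sum, Finset.sum_apply]
    refine Finset.sum_eq_zero fun c _ => ?_
    by_contra hne
    exact hi (hsupp1 j _ (rank_vecMulVec_le' _ _) i hne)
  -- the blockwise maps
  set ψ' : ∀ j, Matrix (Fin (m j)) (Fin (n j)) F →ₗ[F]
      Matrix (Fin (m (τ j))) (Fin (n (τ j))) F := fun j =>
    (LinearMap.proj (τ j)) ∘ₗ (φ ∘ₗ LinearMap.single F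
      (fun i => Matrix (Fin (m i)) (Fin (n i)) F) j) with hψ'def
  have hψ'apply : ∀ j A, ψ' j A = φ (Pi.single j A) (τ j) := fun j A => rfl
  have hψ'rank : ∀ j A, (ψ' j A).rank = A.rank := by
    intro j A
    have h1 : srk (φ (Pi.single j A)) = A.rank := by rw [hφ, hsing]
    have h2 : srk (φ (Pi.single j A)) = (φ (Pi.single j A) (τ j)).rank := by
      simp only [srk]
      rw [Finset.sum_eq_single (τ j)]
      · intro b _ hb; rw [hsupp j A b hb, Matrix.rank_zero]
      · intro h; exact absurd (Finset.mem_univ _) h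
    rw [hψ'apply, ← h2, h1]
  have hψ'inj : ∀ j, Function.Injective (ψ' j) := by
    intro j A A' h
    have h0 : ((ψ' j) (A - A')).rank = 0 := by rw [map_sub, h, sub_self, Matrix.rank_zero]
    rw [hψ'rank] at h0
    exact sub_eq_zero.mp ((rank_eq_zero_iff' _).mp h0)
  have hφsum : ∀ (C : ∀ i, Matrix (Fin (m i)) (Fin (n i)) F) i,
      φ C i = ∑ j, φ (Pi.single j (C j)) i := by
    intro C i
    conv_lhs => rw [← Finset.univ_sum_single C]
    rw [map_sum, Finset.sum_apply]
  -- τ is bijective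
  have hτsurj : Function.Surjective τ := by
    intro t
    by_contra hc; push_neg at hc
    have hbij : Function.Bijective φ := Finite.injective_iff_bijective.mp hinj
    obtain ⟨C, hC⟩ := hbij.2 (Pi.single t (E t))
    have h1 : φ C t = E t := by rw [hC, Pi.single_eq_same]
    have h2 : φ C t = 0 := by
      rw [hφsum]
      exact Finset.sum_eq_zero fun j _ => hsupp j (C j) t (fun h => hc j h.symm)
    rw [h2] at h1
    exact hEne t h1.symm
  have hτbij : Function.Bijective τ := Finite.surjective_iff_bijective.mp hτsurj
  set τe : Equiv.Perm (Fin ℓ) := Equiv.ofBijective τ hτbij with hτe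
  -- size inequalities
  have hm_le : ∀ j, m j ≤ m (τ j) := by
    intro j
    set L : (Fin (m j) → F) →ₗ[F] Matrix (Fin (m j)) (Fin (n j)) F :=
      { toFun := fun u => vecMulVec u (Pi.single (⟨0, hn j⟩ : Fin (n j)) (1:F))
        map_add' := fun a b => (vecMulVec_add_left a b _).symm
        map_smul' := fun c a => by
          ext i jj; simp [vecMulVec_apply, mul_assoc] } with hL
    have hginj : Function.Injective ((ψ' j) ∘ₗ L) := by
      intro a b hab
      have h1 : L a = L b := hψ'inj j hab
      funext x
      have := congrFun (congrFun (congrArg (fun (M : Matrix (Fin (m j)) (Fin (n j)) F) => M)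
        h1) x) ⟨0, hn j⟩
      simpa [hL, vecMulVec_apply] using this
    have hgr : ∀ u, (((ψ' j) ∘ₗ L) u).rank ≤ 1 := by
      intro u
      rw [LinearMap.comp_apply, hψ'rank]
      exact rank_vecMulVec_le' _ _
    have := rankone_inj_le _ hginj hgr
    rwa [max_eq_left (hnm (τ j))] at this
  have hmn_le : ∀ j, m j * n j ≤ m (τ j) * n (τ j) := by
    intro j
    have := Fintype.card_le_of_injective _ (hψ'inj j)
    rw [card_matrix_fin, card_matrix_fin] at this
    exact (Nat.pow_le_pow_iff_right hq2).mp this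
  have hsum_m : ∑ j, m (τ j) = ∑ j, m j := Equiv.sum_comp τe m
  have hm_eq : ∀ j, m (τ j) = m j := by
    intro j
    by_contra hne
    have hlt : m j < m (τ j) := lt_of_le_of_ne (hm_le j) (Ne.symm hne)
    have : ∑ x, m x < ∑ x, m (τ x) :=
      Finset.sum_lt_sum (fun i _ => hm_le i) ⟨j, Finset.mem_univ j, hlt⟩
    omega
  have hn_le : ∀ j, n j ≤ n (τ j) := by
    intro j
    have h := hmn_le j
    rw [hm_eq j] at h
    exact Nat.le_of_mul_le_mul_left h (hm j)
  have hsum_n : ∑ j, n (τ j) = ∑ j, n j := Equiv.sum_comp τe n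
  have hn_eq : ∀ j, n (τ j) = n j := by
    intro j
    by_contra hne
    have hlt : n j < n (τ j) := lt_of_le_of_ne (hn_le j) (Ne.symm hne)
    have : ∑ x, n x < ∑ x, n (τ x) :=
      Finset.sum_lt_sum (fun i _ => hn_le i) ⟨j, Finset.mem_univ j, hlt⟩
    omega
  -- assemble
  have hτσ : ∀ i, τ (τe.symm i) = i := fun i => τe.apply_symm_apply i
  have hm' : ∀ i, m (τe.symm i) = m i :=
    fun i => (hm_eq (τe.symm i)).symm.trans (congrArg m (hτσ i))
  have hn' : ∀ i, n (τe.symm i) = n i :=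
    fun i => (hn_eq (τe.symm i)).symm.trans (congrArg n (hτσ i))
  refine ⟨τe.symm, hm', hn', fun i =>
    (reindexLinearEquiv F F (finCongr (congrArg m (hτσ i)))
        (finCongr (congrArg n (hτσ i)))).toLinearMap
      ∘ₗ (ψ' (τe.symm i))
      ∘ₗ ((reindexLinearEquiv F F (finCongr (hm' i)) (finCongr (hn' i))).symm.toLinearMap),
    ?_, ?_⟩
  · intro i A
    simp only [LinearMap.comp_apply, LinearEquiv.coe_coe, reindexLinearEquiv_symm,
      reindexLinearEquiv_apply]
    rw [rank_reindex', hψ'rank, rank_reindex']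
  · intro C i
    have hLHS : φ C i = φ (Pi.single (τe.symm i) (C (τe.symm i))) i := by
      rw [hφsum]
      apply Finset.sum_eq_single (τe.symm i)
      · intro b _ hb
        apply hsupp b (C b) i
        intro h
        exact hb (hτbij.1 (by rw [hτσ i, h]))
      · intro h; exact absurd (Finset.mem_univ _) h
    rw [hLHS]
    simp only [LinearMap.comp_apply, LinearEquiv.coe_coe, reindexLinearEquiv_symm,
      reindexLinearEquiv_apply]
    rw [show (reindex (finCongr (hm' i)).symm (finCongr (hn' i)).symm)
        ((reindex (finCongr (hm' i)) (finCongr (hn' i))) (C (τe.symm i)))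
        = C (τe.symm i) from by
      rw [← Matrix.reindex_symm]; exact Equiv.symm_apply_apply _ _]
    rw [hψ'apply]
    exact reindex_entry (φ (Pi.single (τe.symm i) (C (τe.symm i)))) (hτσ i)
end

section
/- (Singleton Bound via generalized weights.) Let 0 ≠ 𝒞 ⊆ 𝕄 be a code and let r ∈ {1,…,dim(𝒞)}. Let j ∈ [ℓ] and 0 ≤ δ ≤ n_j−1 be such that d_r(𝒞) − 1 ≥ n_1 + … + n_{j−1} + δ. Then dim(𝒞) ≤ ∑_{i=j}^ℓ m_i n_i − m_j δ + r − 1. -/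
open Matrix

/-- The minimum sum-rank distance of a code. -/
noncomputable def minDist {F : Type} [Field F] {ℓ : ℕ} {m n : Fin ℓ → ℕ}
    (𝒞 : Submodule F (∀ i, Matrix (Fin (m i)) (Fin (n i)) F)) : ℕ :=
  sInf {k | ∃ C ∈ 𝒞, C ≠ 0 ∧ srk C = k}

/-- A linear space of `a × b` matrices is an optimal rank-metric anticode if its
dimension equals `a` times its maximum rank. -/
def IsOptRankAnticode {F : Type} [Field F] {a b : ℕ}
    (𝒜 : Submodule F (Matrix (Fin a) (Fin b) F)) : Prop :=
  Module.finrank F 𝒜 = a * maxrk 𝒜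

/-- The `r`-th generalized sum-rank weight of a code. -/
noncomputable def genWeight {F : Type} [Field F] {ℓ : ℕ} {m n : Fin ℓ → ℕ}
    (𝒞 : Submodule F (∀ i, Matrix (Fin (m i)) (Fin (n i)) F)) (r : ℕ) : ℕ :=
  sInf {w | ∃ 𝒜 : ∀ i, Submodule F (Matrix (Fin (m i)) (Fin (n i)) F),
    (∀ i, IsOptRankAnticode (𝒜 i)) ∧
    r ≤ Module.finrank F ↥(𝒞 ⊓ Submodule.pi Set.univ 𝒜) ∧
    maxsrk (Submodule.pi Set.univ 𝒜) = w}


section Aux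

variable {F : Type} [Field F]

/-- Matrices supported on the first `c` columns. -/
def colSub (F : Type) [Field F] (a b c : ℕ) : Submodule F (Matrix (Fin a) (Fin b) F) where
  carrier := {M | ∀ (x : Fin a) (y : Fin b), c ≤ (y : ℕ) → M x y = 0}
  add_mem' {M N} hM hN x y hy := by simp [hM x y hy, hN x y hy]
  zero_mem' x y _ := rfl
  smul_mem' t M hM x y hy := by simp [hM x y hy]

lemma mem_colSub {a b c : ℕ} {M : Matrix (Fin a) (Fin b) F} :
    M ∈ colSub F a b c ↔ ∀ (x : Fin a) (y : Fin b), c ≤ (y : ℕ) → M x y = 0 := Iff.rfl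

/-- A selection matrix. -/
def sel (F : Type) [Field F] (c a : ℕ) : Matrix (Fin c) (Fin a) F :=
  Matrix.of fun u x => if (u : ℕ) = (x : ℕ) then 1 else 0

lemma sel_mul_transpose {c a : ℕ} (hc : c ≤ a) :
    sel F c a * (sel F c a)ᵀ = 1 := by
  ext u v
  simp only [Matrix.mul_apply, sel, Matrix.transpose_apply, Matrix.of_apply, Matrix.one_apply]
  rw [Finset.sum_eq_single (Fin.castLE hc u)]
  · simp [Fin.ext_iff, eq_comm]
  · intro x _ hx
    rw [if_neg, zero_mul]
    intro h
    exact hx (by simp [Fin.ext_iff, ← h])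
  · simp

lemma rank_le_of_mem_colSub {a b c : ℕ} (hc : c ≤ b) {M : Matrix (Fin a) (Fin b) F}
    (h : M ∈ colSub F a b c) : M.rank ≤ c := by
  set N : Matrix (Fin a) (Fin c) F := Matrix.of fun x u => M x (Fin.castLE hc u) with hN
  have hMN : M = N * sel F c b := by
    ext x z
    simp only [Matrix.mul_apply, hN, sel, Matrix.of_apply]
    by_cases hz : (z : ℕ) < c
    · rw [Finset.sum_eq_single (⟨(z : ℕ), hz⟩ : Fin c)]
      · simp [Fin.ext_iff]
      · intro u _ hu
        rw [if_neg, mul_zero]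
        intro h'
        exact hu (by simp [Fin.ext_iff, h'])
      · simp
    · rw [h x z (le_of_not_gt hz), Finset.sum_eq_zero]
      intro u _
      rw [if_neg, mul_zero]
      omega
  calc M.rank ≤ N.rank := hMN ▸ Matrix.rank_mul_le_left N (sel F c b)
    _ ≤ c := Matrix.rank_le_width N

lemma colSub_maxrk {a b c : ℕ} (hca : c ≤ a) (hcb : c ≤ b) :
    maxrk (colSub F a b c) = c := by
  set M0 : Matrix (Fin a) (Fin b) F := (sel F c a)ᵀ * sel F c b with hM0
  have hmem : M0 ∈ colSub F a b c := by
    intro x y hy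
    simp only [hM0, Matrix.mul_apply, Matrix.transpose_apply, sel, Matrix.of_apply]
    apply Finset.sum_eq_zero
    intro u _
    have h' : ((u : ℕ) = (y : ℕ)) = False := by simp; omega
    simp [h']
  have hrank : M0.rank = c := by
    have h1 : sel F c a * M0 * (sel F c b)ᵀ = 1 := by
      rw [hM0]
      simp only [Matrix.mul_assoc]
      rw [sel_mul_transpose hcb, Matrix.mul_one, sel_mul_transpose hca]
    have h2 : c ≤ M0.rank := by
      calc c = (1 : Matrix (Fin c) (Fin c) F).rank := by
              rw [Matrix.rank_one, Fintype.card_fin]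
        _ = (sel F c a * M0 * (sel F c b)ᵀ).rank := by rw [h1]
        _ ≤ (sel F c a * M0).rank := Matrix.rank_mul_le_left _ _
        _ ≤ M0.rank := Matrix.rank_mul_le_right _ _
    exact le_antisymm (rank_le_of_mem_colSub hcb hmem) h2
  have hbdd : ∀ k ∈ {k | ∃ M ∈ colSub F a b c, M.rank = k}, k ≤ c := by
    rintro k ⟨M, hM, rfl⟩
    exact rank_le_of_mem_colSub hcb hM
  refine le_antisymm (csSup_le ⟨c, M0, hmem, hrank⟩ hbdd) ?_
  exact le_csSup ⟨c, hbdd⟩ ⟨M0, hmem, hrank⟩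

lemma colSub_finrank {a b c : ℕ} (hc : c ≤ b) :
    Module.finrank F (colSub F a b c) = a * c := by
  let ψ : Matrix (Fin a) (Fin b) F →ₗ[F] Matrix (Fin a) (Fin c) F :=
    { toFun := fun M => Matrix.of fun x u => M x (Fin.castLE hc u)
      map_add' := fun _ _ => rfl
      map_smul' := fun _ _ => rfl }
  have hbij : Function.Bijective (ψ.comp (colSub F a b c).subtype) := by
    constructor
    · rw [← LinearMap.ker_eq_bot, eq_bot_iff]
      rintro ⟨M, hM⟩ hker
      have : ψ M = 0 := hker
      ext x y
      by_cases hy : (y : ℕ) < c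
      · have := congrFun (congrFun this x) ⟨(y : ℕ), hy⟩
        exact this
      · exact hM x y (le_of_not_gt hy)
    · intro N
      refine ⟨⟨fun x y => if h : (y : ℕ) < c then N x ⟨(y : ℕ), h⟩ else 0, ?_⟩, ?_⟩
      · intro x y hy
        exact dif_neg (by omega)
      · ext x u
        exact dif_pos u.2
  have := (LinearEquiv.ofBijective _ hbij).finrank_eq
  rw [this, Module.finrank_matrix]
  simp

lemma colSub_anticode {a b c : ℕ} (hca : c ≤ a) (hcb : c ≤ b) :
    IsOptRankAnticode (colSub F a b c) := by
  rw [IsOptRankAnticode, colSub_maxrk hca hcb, colSub_finrank hcb]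

/-- Pi of submodules is linearly equiv to the pi of the subtypes. -/
def piSubEquiv {ι : Type} {φ : ι → Type*} [∀ i, AddCommGroup (φ i)] [∀ i, Module F (φ i)]
    (p : ∀ i, Submodule F (φ i)) : (Submodule.pi Set.univ p) ≃ₗ[F] ∀ i, p i where
  toFun x i := ⟨x.1 i, x.2 i trivial⟩
  invFun f := ⟨fun i => (f i : φ i), fun i _ => (f i).2⟩
  map_add' _ _ := rfl
  map_smul' _ _ := rfl
  left_inv _ := rfl
  right_inv _ := rfl

lemma finrank_pi_submodule {ι : Type} [Fintype ι] {φ : ι → Type*} [∀ i, AddCommGroup (φ i)]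
    [∀ i, Module F (φ i)] [∀ i, FiniteDimensional F (φ i)] (p : ∀ i, Submodule F (φ i)) :
    Module.finrank F (Submodule.pi Set.univ p) = ∑ i, Module.finrank F (p i) := by
  rw [(piSubEquiv p).finrank_eq, Module.finrank_pi_fintype]

end Aux

lemma sum_split_Iio {ℓ : ℕ} (j : Fin ℓ) (f : Fin ℓ → ℕ) :
    ∑ i, f i = (∑ i ∈ Finset.Iio j, f i) + ∑ i ∈ Finset.Ici j, f i := by
  classical
  rw [← Finset.sum_filter_add_sum_filter_not Finset.univ (· < j) f]
  congr 1
  · congr 1; ext i; simp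
  · congr 1; ext i; simp [not_lt]

lemma sum_if_lt {ℓ : ℕ} (j : Fin ℓ) (f : Fin ℓ → ℕ) (d : ℕ) :
    (∑ i, if i < j then f i else if i = j then d else 0)
      = (∑ i ∈ Finset.Iio j, f i) + d := by
  classical
  rw [sum_split_Iio j]
  congr 1
  · exact Finset.sum_congr rfl fun i hi => if_pos (Finset.mem_Iio.mp hi)
  · rw [Finset.sum_congr rfl fun i hi => if_neg (not_lt.mpr (Finset.mem_Ici.mp hi))]
    simp

/-- **Singleton Bound via generalized weights.** -/
theorem statement16 (q : ℕ) (hq : IsPrimePow q)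
    (F : Type) [Field F] [Fintype F] (hF : Fintype.card F = q)
    (ℓ : ℕ) (hℓ : 1 ≤ ℓ) (m n : Fin ℓ → ℕ)
    (hm : ∀ i, 1 ≤ m i) (hn : ∀ i, 1 ≤ n i)
    (hmon : Antitone m) (hnm : ∀ i, n i ≤ m i)
    (𝒞 : Submodule F (∀ i, Matrix (Fin (m i)) (Fin (n i)) F)) (h0 : 𝒞 ≠ ⊥)
    (r : ℕ) (hr1 : 1 ≤ r) (hr2 : r ≤ Module.finrank F 𝒞)
    (j : Fin ℓ) (δ : ℕ) (hδ : δ < n j)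
    (hd : (∑ i ∈ Finset.Iio j, n i) + δ + 1 ≤ genWeight 𝒞 r) :
    Module.finrank F 𝒞 ≤ (∑ i ∈ Finset.Ici j, m i * n i) - m j * δ + r - 1 := by
  classical
  set c : Fin ℓ → ℕ := fun i => if i < j then n i else if i = j then δ else 0 with hc
  have hcb : ∀ i, c i ≤ n i := by
    intro i
    simp only [hc]
    split_ifs with h1 h2
    · exact le_rfl
    · subst h2; omega
    · exact Nat.zero_le _
  have hca : ∀ i, c i ≤ m i := fun i => (hcb i).trans (hnm i)
  set 𝒜 : ∀ i, Submodule F (Matrix (Fin (m i)) (Fin (n i)) F) :=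
    fun i => colSub F (m i) (n i) (c i) with h𝒜
  have hanti : ∀ i, IsOptRankAnticode (𝒜 i) := fun i => colSub_anticode (hca i) (hcb i)
  set A' := Submodule.pi Set.univ 𝒜 with hA'
  -- sum computations
  have h1 : ∑ i, c i = (∑ i ∈ Finset.Iio j, n i) + δ := by
    simp only [hc]; exact sum_if_lt j n δ
  have h2 : ∑ i, m i * c i = (∑ i ∈ Finset.Iio j, m i * n i) + m j * δ := by
    have key : ∀ i, m i * c i = (if i < j then m i * n i else if i = j then m j * δ else 0) := by
      intro i
      simp only [hc]
      split_ifs with ha hb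
      · rfl
      · subst hb; rfl
      · simp
    rw [Finset.sum_congr rfl fun i _ => key i]
    exact sum_if_lt j (fun i => m i * n i) (m j * δ)
  have h3 : m j * δ ≤ ∑ i ∈ Finset.Ici j, m i * n i :=
    le_trans (Nat.mul_le_mul_left _ (le_of_lt hδ))
      (Finset.single_le_sum (f := fun i => m i * n i) (fun i _ => Nat.zero_le _) (Finset.mem_Ici.mpr le_rfl))
  -- maxsrk bound
  have hmax : maxsrk A' ≤ (∑ i ∈ Finset.Iio j, n i) + δ := by
    apply csSup_le
    · exact ⟨0, 0, A'.zero_mem, by simp [srk, Matrix.rank_zero]⟩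
    · rintro k ⟨C, hC, rfl⟩
      calc srk C = ∑ i, (C i).rank := rfl
        _ ≤ ∑ i, c i := Finset.sum_le_sum fun i _ =>
            rank_le_of_mem_colSub (hcb i) (hC i trivial)
        _ = _ := h1
  -- intersection bound
  have hinf : Module.finrank F ↥(𝒞 ⊓ A') < r := by
    by_contra h
    push_neg at h
    have h2' : genWeight 𝒞 r ≤ maxsrk A' := Nat.sInf_le ⟨𝒜, hanti, h, rfl⟩
    omega
  -- dimension counting
  have hkey := Submodule.finrank_sup_add_finrank_inf_eq 𝒞 A'
  have hsup : Module.finrank F ↥(𝒞 ⊔ A') ≤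
      Module.finrank F (∀ i, Matrix (Fin (m i)) (Fin (n i)) F) := Submodule.finrank_le _
  have hT : Module.finrank F (∀ i, Matrix (Fin (m i)) (Fin (n i)) F)
      = (∑ i ∈ Finset.Iio j, m i * n i) + ∑ i ∈ Finset.Ici j, m i * n i := by
    rw [Module.finrank_pi_fintype, ← sum_split_Iio j]
    apply Finset.sum_congr rfl
    intro i _
    rw [Module.finrank_matrix]
    simp
  have hfA : Module.finrank F A' = (∑ i ∈ Finset.Iio j, m i * n i) + m j * δ := by
    rw [hA', finrank_pi_submodule, ← h2]
    exact Finset.sum_congr rfl fun i _ => colSub_finrank (hcb i)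
  omega
end
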